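/- arXiv:2410.16709 — 4 statements merged into one kernel-verified Lean document; each statement's English description precedes it below -/
import Mathlib

section
/- Let T>0 and let f:ℝ^N×ℝ→ℝ^N be measurable, satisfy a Lipschitz condition with respect to x (uniformly in t), be locally essentially bounded, and be T-periodic in time: f(x,t+T)=f(x,t) for a.e. (x,t). For m∈ℕ define f_m(x,t):=f(x,mt) and the time average f̄(x):=(1/T)∫₀ᵀ f(x,t)dt. Then for every initial value ξ in a bounded closed set D⊂ℝ^N, the solutions x_m(t)=S_{f_m}(t)ξ converge to x̄(t)=S_{f̄}(t)ξ uniformly on [0,T] as m→∞. -/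
open MeasureTheory Set intervalIntegral Bornology Filter
open scoped ENNReal NNReal

noncomputable section

set_option maxHeartbeats 1000000

open MeasureTheory Set intervalIntegral Bornology Filter
open scoped ENNReal NNReal

noncomputable section

variable {E : Type*} [NormedAddCommGroup E] [NormedSpace ℝ E] [CompleteSpace E]

lemma ae_comp_const_mul {c : ℝ} (hc : c ≠ 0) {p : ℝ → Prop}
    (hp : ∀ᵐ t ∂(volume : Measure ℝ), p t) :
    ∀ᵐ s ∂(volume : Measure ℝ), p (c * s) := by
  have hq : Measure.QuasiMeasurePreserving (fun s : ℝ => c * s) volume volume := by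
    refine ⟨(measurable_const_mul c), ?_⟩
    rw [Real.map_volume_mul_left hc]
    exact Measure.smul_absolutelyContinuous
  exact hq.ae hp

/-- Integral form of Gronwall's inequality. -/
lemma gronwall_integral {φ : ℝ → ℝ} (hφ : Continuous φ) (hφ0 : ∀ s, 0 ≤ φ s)
    {T a K : ℝ} (ha : 0 ≤ a) (hK : 0 ≤ K)
    (h : ∀ t ∈ Icc (0:ℝ) T, φ t ≤ a + K * ∫ s in (0:ℝ)..t, φ s) :
    ∀ t ∈ Icc (0:ℝ) T, φ t ≤ a * Real.exp (K * T) := by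
  intro t ht
  set ψ : ℝ → ℝ := fun u => a + K * ∫ s in (0:ℝ)..u, φ s with hψdef
  have hψd : ∀ u : ℝ, HasDerivAt ψ (K * φ u) u := fun u =>
    (((hφ.integral_hasStrictDerivAt 0 u).hasDerivAt).const_mul K).const_add a
  have hψcont : Continuous ψ := by
    refine continuous_iff_continuousAt.2 fun u => (hψd u).continuousAt
  have hψnn : ∀ u ∈ Icc (0:ℝ) T, 0 ≤ ψ u := by
    intro u hu
    have : 0 ≤ ∫ s in (0:ℝ)..u, φ s :=
      intervalIntegral.integral_nonneg hu.1 fun s _ => hφ0 s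
    positivity
  have key : ∀ u ∈ Icc (0:ℝ) T, ‖ψ u‖ ≤ gronwallBound a K 0 (u - 0) := by
    refine norm_le_gronwallBound_of_norm_deriv_right_le hψcont.continuousOn
      (fun u _ => (hψd u).hasDerivWithinAt) (by simp [hψdef, abs_of_nonneg ha]) ?_
    intro u hu
    have h1 : φ u ≤ ψ u := h u ⟨hu.1, hu.2.le⟩
    have h2 : 0 ≤ ψ u := hψnn u ⟨hu.1, hu.2.le⟩
    rw [Real.norm_of_nonneg (mul_nonneg hK (hφ0 u)), Real.norm_of_nonneg h2]
    nlinarith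
  have h1 : φ t ≤ ψ t := h t ht
  have h2 := key t ht
  rw [Real.norm_of_nonneg (hψnn t ht), gronwallBound_ε0, sub_zero] at h2
  have : Real.exp (K * t) ≤ Real.exp (K * T) :=
    Real.exp_le_exp.2 (by nlinarith [ht.2])
  nlinarith [Real.exp_pos (K * t)]

/-- Integral of an a.e.-periodic function over one period is shift invariant. -/
lemma periodic_interval_integral (h : ℝ → E) {T : ℝ}
    (hI : ∀ a b : ℝ, IntervalIntegrable h volume a b)
    (hp : ∀ᵐ t ∂(volume : Measure ℝ), h (t + T) = h t) (a : ℝ) :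
    ∫ s in a..(a+T), h s = ∫ s in (0:ℝ)..T, h s := by
  have e1 : ∫ s in T..(a+T), h s = ∫ s in (0:ℝ)..a, h s := by
    have h0 := intervalIntegral.integral_comp_add_right (a := 0) (b := a) h T
    rw [zero_add] at h0
    rw [← h0]
    exact intervalIntegral.integral_congr_ae
      (by filter_upwards [hp] with x hx _; exact hx)
  have e2 := intervalIntegral.integral_add_adjacent_intervals (hI a 0) (hI 0 T)
  have e3 := intervalIntegral.integral_add_adjacent_intervals (hI a T) (hI T (a+T))
  have e4 : ∫ s in a..(0:ℝ), h s = - ∫ s in (0:ℝ)..a, h s :=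
    intervalIntegral.integral_symm 0 a
  rw [← e3, ← e2, e1, e4]; abel

lemma periodic_zero_integral (h : ℝ → E) {T : ℝ}
    (hI : ∀ a b : ℝ, IntervalIntegrable h volume a b)
    (hp : ∀ᵐ t ∂(volume : Measure ℝ), h (t + T) = h t)
    (hz : ∫ s in (0:ℝ)..T, h s = 0) :
    ∀ (k : ℕ) (a : ℝ), ∫ s in a..(a + k*T), h s = 0 := by
  intro k
  induction k with
  | zero => simp
  | succ k ih =>
    intro a
    have he : (a + (k+1 : ℕ)*T) = (a + k*T) + T := by push_cast; ring
    rw [he, ← intervalIntegral.integral_add_adjacent_intervals (hI a (a+k*T))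
      (hI (a+k*T) (a+k*T+T)), ih a, periodic_interval_integral h hI hp (a+k*T), hz, add_zero]

/-- Partial integrals of an a.e.-periodic, mean-zero, essentially bounded function
are uniformly bounded. -/
lemma osc_bound (h : ℝ → E) {T C : ℝ} (hT : 0 < T)
    (hI : ∀ a b : ℝ, IntervalIntegrable h volume a b)
    (hp : ∀ᵐ t ∂(volume : Measure ℝ), h (t + T) = h t)
    (hz : ∫ s in (0:ℝ)..T, h s = 0) (hC : 0 ≤ C)
    (hbd : ∀ᵐ t ∂(volume : Measure ℝ), ‖h t‖ ≤ C) :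
    ∀ a b : ℝ, a ≤ b → ‖∫ s in a..b, h s‖ ≤ C * T := by
  intro a b hab
  set k := ⌊(b-a)/T⌋₊ with hk
  have hfl := Nat.floor_le (div_nonneg (by linarith : (0:ℝ) ≤ b - a) hT.le)
  have hfl2 := Nat.lt_floor_add_one ((b-a)/T)
  have hk1 : a + k*T ≤ b := by
    have : (k : ℝ) * T ≤ b - a := by
      rw [← le_div_iff₀ hT] at *; exact hfl
    linarith
  have hk2 : b - (a + k*T) ≤ T := by
    have : b - a < ((k : ℝ) + 1) * T := by
      rw [← div_lt_iff₀ hT]; exact hfl2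
    nlinarith
  have e : ∫ s in a..b, h s = ∫ s in (a + k*T)..b, h s := by
    rw [← intervalIntegral.integral_add_adjacent_intervals (hI a (a+k*T)) (hI (a+k*T) b),
      periodic_zero_integral h hI hp hz k a, zero_add]
  rw [e]
  have hb := intervalIntegral.norm_integral_le_abs_of_norm_le
    (f := h) (g := fun _ => C) (μ := volume) (a := a + k*T) (b := b)
    (ae_restrict_of_ae hbd) (intervalIntegrable_const)
  rw [intervalIntegral.integral_const, smul_eq_mul, abs_mul,
    abs_of_nonneg (by linarith : (0:ℝ) ≤ b - (a + k*T)), abs_of_nonneg hC] at hb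
  nlinarith


/-- `x` is a solution on `[0,T]` of the ODE `x' = f(x,t)` with initial value `ξ`,
in integral form: `x(t) = ξ + ∫₀ᵗ f(x(s),s) ds`, `x ∈ C⁰([0,T];ℝᴺ)`. -/
def IsSol {N : ℕ} (f : EuclideanSpace ℝ (Fin N) → ℝ → EuclideanSpace ℝ (Fin N)) (T : ℝ)
    (ξ : EuclideanSpace ℝ (Fin N)) (x : ℝ → EuclideanSpace ℝ (Fin N)) : Prop :=
  ContinuousOn x (Set.Icc 0 T) ∧
    ∀ t ∈ Set.Icc (0 : ℝ) T, x t = ξ + ∫ s in (0 : ℝ)..t, f (x s) s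

/-- Averaging theorem of Piccinini–Stampacchia–Vidossich.
Let `f : ℝᴺ × ℝ → ℝᴺ` be measurable, Lipschitz in `x` uniformly in `t`, locally
essentially bounded in time, and `T`-periodic in time (for a.e. `t`). For `m ∈ ℕ` let
`f_m(x,t) := f(x,mt)` and `f̄(x) := (1/T)∫₀ᵀ f(x,t) dt`. Then for every initial value
`ξ` in a bounded closed set `D`, the solutions `x_m = S_{f_m}(·)ξ` converge to
`x̄ = S_{f̄}(·)ξ` uniformly on `[0,T]` as `m → ∞`. -/
theorem averaging {N : ℕ} (T : ℝ) (hT : 0 < T)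
    (f : EuclideanSpace ℝ (Fin N) → ℝ → EuclideanSpace ℝ (Fin N))
    (hmeas : Measurable (Function.uncurry f))
    (K : ℝ≥0) (hLip : ∀ t : ℝ, LipschitzWith K (fun z => f z t))
    (hbd : ∀ z, ∃ C, ∀ᵐ t ∂(volume : Measure ℝ), ‖f z t‖ ≤ C)
    (hper : ∀ᵐ t ∂(volume : Measure ℝ), ∀ z, f z (t + T) = f z t)
    (D : Set (EuclideanSpace ℝ (Fin N))) (hDb : IsBounded D) (hDc : IsClosed D)
    (ξ : EuclideanSpace ℝ (Fin N)) (hξ : ξ ∈ D)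
    (xm : ℕ → ℝ → EuclideanSpace ℝ (Fin N))
    (hxm : ∀ m : ℕ, IsSol (fun z t => f z (m * t)) T ξ (xm m))
    (xb : ℝ → EuclideanSpace ℝ (Fin N))
    (hxb : IsSol (fun z _t => (1 / T) • ∫ s in (0 : ℝ)..T, f z s) T ξ xb) :
    TendstoUniformlyOn (fun m t => xm m t) xb atTop (Set.Icc 0 T) := by
  classical
  have hT0 : (0:ℝ) ≤ T := hT.le
  have hTne : T ≠ 0 := ne_of_gt hT
  -- measurability of time slices
  have hmz : ∀ z, Measurable (fun t => f z t) := fun z =>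
    hmeas.comp measurable_prodMk_left
  -- global essential bound anchored at ξ
  obtain ⟨C₁, hC₁⟩ := hbd ξ
  set C₀ := max C₁ 0 with hC₀def
  have hC₀0 : (0:ℝ) ≤ C₀ := le_max_right _ _
  have hC₀ : ∀ᵐ t ∂(volume : Measure ℝ), ‖f ξ t‖ ≤ C₀ :=
    hC₁.mono fun t ht => ht.trans (le_max_left _ _)
  have hlip : ∀ (t : ℝ) z z', ‖f z t - f z' t‖ ≤ K * ‖z - z'‖ := by
    intro t z z'
    have := (hLip t).dist_le_mul z z'
    rwa [dist_eq_norm, dist_eq_norm] at this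
  have hGood : ∀ᵐ t ∂(volume : Measure ℝ), ∀ z, ‖f z t‖ ≤ C₀ + K * ‖z - ξ‖ := by
    filter_upwards [hC₀] with t ht z
    have h1 := hlip t z ξ
    have h2 : ‖f z t‖ - ‖f ξ t‖ ≤ ‖f z t - f ξ t‖ := norm_sub_norm_le _ _
    linarith
  -- slices are interval integrable
  have hIz : ∀ (z : EuclideanSpace ℝ (Fin N)) (a b : ℝ),
      IntervalIntegrable (fun s => f z s) volume a b := by
    intro z a b
    rw [intervalIntegrable_iff]
    refine Integrable.mono' (g := fun _ => C₀ + K * ‖z - ξ‖)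
      (integrableOn_const measure_Ioc_lt_top.ne)
      ((hmz z).aestronglyMeasurable.restrict)
      (ae_restrict_of_ae (hGood.mono fun t ht => ht z))
  -- the averaged field
  set fbar : EuclideanSpace ℝ (Fin N) → EuclideanSpace ℝ (Fin N) :=
    fun z => (1 / T) • ∫ s in (0:ℝ)..T, f z s with hfbardef
  have hfbarLip : LipschitzWith K fbar := by
    refine LipschitzWith.of_dist_le_mul fun z z' => ?_
    rw [dist_eq_norm, dist_eq_norm]
    have hsub : fbar z - fbar z' = (1/T) • ∫ s in (0:ℝ)..T, (f z s - f z' s) := by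
      rw [intervalIntegral.integral_sub (hIz z 0 T) (hIz z' 0 T), smul_sub]
    have h1 : ‖∫ s in (0:ℝ)..T, (f z s - f z' s)‖ ≤ (K * ‖z - z'‖) * |T - 0| :=
      intervalIntegral.norm_integral_le_of_norm_le_const fun s _ => hlip s z z'
    rw [sub_zero, abs_of_nonneg hT0] at h1
    rw [hsub, norm_smul, Real.norm_eq_abs, abs_of_nonneg (by positivity : (0:ℝ) ≤ 1/T)]
    calc (1/T) * ‖∫ s in (0:ℝ)..T, (f z s - f z' s)‖
        ≤ (1/T) * ((K * ‖z - z'‖) * T) := by gcongr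
      _ = K * ‖z - z'‖ := by field_simp
  have hfbar_cont : Continuous fbar := hfbarLip.continuous
  have hfbar_bd : ∀ z, ‖fbar z‖ ≤ C₀ + K * ‖z - ξ‖ := by
    intro z
    have h1 : ‖∫ s in (0:ℝ)..T, f z s‖ ≤ |∫ s in (0:ℝ)..T, (C₀ + K * ‖z - ξ‖ : ℝ)| :=
      intervalIntegral.norm_integral_le_abs_of_norm_le
        (ae_restrict_of_ae (hGood.mono fun t ht => ht z)) intervalIntegrable_const
    rw [intervalIntegral.integral_const, smul_eq_mul, sub_zero, abs_mul,
      abs_of_nonneg hT0, abs_of_nonneg (by positivity)] at h1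
    rw [hfbardef, norm_smul, Real.norm_eq_abs, abs_of_nonneg (by positivity : (0:ℝ) ≤ 1/T)]
    calc (1/T) * ‖∫ s in (0:ℝ)..T, f z s‖ ≤ (1/T) * (T * (C₀ + K * ‖z - ξ‖)) := by gcongr
      _ = C₀ + K * ‖z - ξ‖ := by field_simp
  have hmean : ∀ z, ∫ s in (0:ℝ)..T, (f z s - fbar z) = 0 := by
    intro z
    rw [intervalIntegral.integral_sub (hIz z 0 T) intervalIntegrable_const,
      intervalIntegral.integral_const, sub_zero, sub_eq_zero, hfbardef]
    rw [smul_smul]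
    rw [show T * (1/T) = 1 by field_simp, one_smul]
  -- interval integrability of the field along a continuous curve with compressed time
  have hIcomp : ∀ (x : ℝ → EuclideanSpace ℝ (Fin N)), ContinuousOn x (Icc 0 T) →
      ∀ (c : ℝ), c ≠ 0 → ∀ a b : ℝ, a ∈ Icc (0:ℝ) T → b ∈ Icc (0:ℝ) T →
      IntervalIntegrable (fun s => f (x s) (c * s)) volume a b := by
    intro x hx c hc a b ha hb
    obtain ⟨R, hR⟩ : ∃ R, ∀ s ∈ Icc (0:ℝ) T, ‖x s‖ ≤ R := by
      obtain ⟨R, hR⟩ := (isCompact_Icc.image_of_continuousOn hx).isBounded.exists_norm_le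
      exact ⟨R, fun s hs => hR _ (mem_image_of_mem _ hs)⟩
    have hsub : Set.uIoc a b ⊆ Icc (0:ℝ) T :=
      Set.Ioc_subset_Icc_self.trans (Set.Icc_subset_Icc (le_min ha.1 hb.1) (max_le ha.2 hb.2))
    rw [intervalIntegrable_iff]
    have hmcurve : AEStronglyMeasurable (fun s => f (x s) (c * s)) (volume.restrict (Set.uIoc a b)) := by
      have hx' : AEMeasurable x (volume.restrict (Set.uIoc a b)) :=
        (hx.mono hsub).aemeasurable measurableSet_uIoc
      have hpair : AEMeasurable (fun s => (x s, c * s)) (volume.restrict (Set.uIoc a b)) :=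
        hx'.prodMk (measurable_const_mul c).aemeasurable
      exact (hmeas.comp_aemeasurable hpair).aestronglyMeasurable
    refine Integrable.mono' (g := fun _ => C₀ + K * (R + ‖ξ‖))
      (integrableOn_const measure_Ioc_lt_top.ne) hmcurve ?_
    filter_upwards [ae_restrict_of_ae (ae_comp_const_mul hc hGood),
      ae_restrict_mem measurableSet_uIoc] with s hs hmem
    have h1 := hs (x s)
    have h2 : ‖x s - ξ‖ ≤ R + ‖ξ‖ := by
      have := hR s (hsub hmem)
      have := norm_sub_le (x s) ξ
      linarith
    have hK0 : (0:ℝ) ≤ K := K.coe_nonneg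
    nlinarith
  -- data for the averaged curve
  obtain ⟨hxbc, hxbe'⟩ := hxb
  have hxbe : ∀ t ∈ Icc (0:ℝ) T, xb t = ξ + ∫ s in (0:ℝ)..t, fbar (xb s) := hxbe'
  obtain ⟨Rb', hRb'⟩ : ∃ R, ∀ s ∈ Icc (0:ℝ) T, ‖xb s‖ ≤ R := by
    obtain ⟨R, hR⟩ := (isCompact_Icc.image_of_continuousOn hxbc).isBounded.exists_norm_le
    exact ⟨R, fun s hs => hR _ (mem_image_of_mem _ hs)⟩
  set Rb : ℝ := Rb' + ‖ξ‖ with hRbdef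
  have hxbR : ∀ s ∈ Icc (0:ℝ) T, ‖xb s - ξ‖ ≤ Rb := by
    intro s hs
    have h1 := hRb' s hs
    have h2 := norm_sub_le (xb s) ξ
    rw [hRbdef]; linarith
  have hRb0 : (0:ℝ) ≤ Rb := le_trans (norm_nonneg _) (hxbR 0 ⟨le_refl _, hT0⟩)
  set Cb : ℝ := C₀ + K * Rb with hCbdef
  have hCb0 : (0:ℝ) ≤ Cb := by positivity
  obtain ⟨M, hM0, hosc⟩ : ∃ M : ℝ, 0 ≤ M ∧
      ∀ z : EuclideanSpace ℝ (Fin N), ‖z - ξ‖ ≤ Rb → ∀ a b : ℝ, a ≤ b →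
      ‖∫ s in a..b, (f z s - fbar z)‖ ≤ M := by
    refine ⟨2 * Cb * T, by positivity, ?_⟩
    intro z hz a b hab
    have hI' : ∀ a b : ℝ, IntervalIntegrable (fun s => f z s - fbar z) volume a b :=
      fun a b => (hIz z a b).sub intervalIntegrable_const
    have hp' : ∀ᵐ t ∂(volume : Measure ℝ), f z (t + T) - fbar z = f z t - fbar z :=
      hper.mono fun t ht => by rw [ht z]
    have hbd' : ∀ᵐ t ∂(volume : Measure ℝ), ‖f z t - fbar z‖ ≤ 2 * Cb := by
      filter_upwards [hGood] with t ht
      have h1 := ht z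
      have h2 := hfbar_bd z
      have h3 := norm_sub_le (f z t) (fbar z)
      have hK0 : (0:ℝ) ≤ K := K.coe_nonneg
      rw [hCbdef]; nlinarith
    exact osc_bound (fun s => f z s - fbar z) hT hI' hp' (hmean z)
      (by positivity) hbd' a b hab
  -- uniform continuity of the averaged solution
  have hUC := Metric.uniformContinuousOn_iff.1
    (isCompact_Icc.uniformContinuousOn_of_continuous hxbc)
  have hK0 : (0:ℝ) ≤ K := K.coe_nonneg
  -- KEY estimate: the averaged deviation integral is eventually uniformly small
  have key : ∀ α : ℝ, 0 < α → ∃ M₀ : ℕ, 1 ≤ M₀ ∧ ∀ m : ℕ, M₀ ≤ m → ∀ t ∈ Icc (0:ℝ) T,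
      ‖∫ s in (0:ℝ)..t, (f (xb s) ((m:ℝ) * s) - fbar (xb s))‖ ≤ α := by
    intro α hα
    obtain ⟨ε', hε'0, hε'eq⟩ : ∃ e : ℝ, 0 < e ∧ e * (2*(2*K*T+1)) = α :=
      ⟨α / (2*(2*K*T+1)), by positivity, by field_simp⟩
    obtain ⟨δ, hδ0, hδ⟩ := hUC ε' hε'0
    obtain ⟨n, hn0, hTn⟩ : ∃ n : ℕ, (0:ℝ) < n ∧ T/(n:ℝ) < δ := by
      refine ⟨⌊T/δ⌋₊ + 1, by positivity, ?_⟩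
      have h1 : T/δ < ((⌊T/δ⌋₊ + 1 : ℕ):ℝ) := by
        have := Nat.lt_floor_add_one (T/δ)
        push_cast; linarith
      rw [div_lt_iff₀ (by positivity)]
      calc T = (T/δ) * δ := by field_simp
        _ < ((⌊T/δ⌋₊ + 1 : ℕ):ℝ) * δ := by gcongr
        _ = δ * ((⌊T/δ⌋₊ + 1 : ℕ):ℝ) := by ring
    obtain ⟨M₀, hM₀1, hM₀ge⟩ : ∃ M₀ : ℕ, 1 ≤ M₀ ∧ 2*(n:ℝ)*M/α ≤ (M₀:ℝ) := by
      refine ⟨⌈2*(n:ℝ)*M/α⌉₊ + 1, Nat.le_add_left _ _, ?_⟩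
      push_cast
      linarith [Nat.le_ceil (2*(n:ℝ)*M/α)]
    refine ⟨M₀, hM₀1, fun m hm t ht => ?_⟩
    have hm1 : 1 ≤ m := le_trans hM₀1 hm
    have hc0 : (0:ℝ) < (m:ℝ) := by exact_mod_cast Nat.lt_of_lt_of_le Nat.zero_lt_one hm1
    have ht0 : (0:ℝ) ≤ t := ht.1
    have htT : t ≤ T := ht.2
    -- the partition
    set u : ℕ → ℝ := fun i => t * i / n with hudef
    have hu0 : u 0 = 0 := by simp [hudef]
    have hun : u n = t := by rw [hudef]; field_simp
    have humono : ∀ i : ℕ, u i ≤ u (i+1) := by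
      intro i
      rw [hudef]
      push_cast
      gcongr
      linarith
    have hustep : ∀ i : ℕ, u (i+1) - u i = t/n := by
      intro i
      rw [hudef]
      push_cast
      rw [div_sub_div_same]
      congr 1
      ring
    have humem : ∀ i : ℕ, i ≤ n → u i ∈ Icc (0:ℝ) T := by
      intro i hi
      constructor
      · rw [hudef]; positivity
      · rw [hudef]
        calc t * i / n ≤ t * n / n := by gcongr
          _ = t := mul_div_cancel_right₀ t (ne_of_gt hn0)
          _ ≤ T := htT
    -- integrability of the full integrand on each piece
    have hIfull : ∀ (a b : ℝ), a ∈ Icc (0:ℝ) T → b ∈ Icc (0:ℝ) T →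
        IntervalIntegrable (fun s => f (xb s) ((m:ℝ) * s) - fbar (xb s)) volume a b := by
      intro a b ha hb
      refine (hIcomp xb hxbc _ hc0.ne' a b ha hb).sub ?_
      refine ContinuousOn.intervalIntegrable ?_
      refine (hfbar_cont.comp_continuousOn (hxbc.mono ?_))
      exact Set.uIcc_subset_Icc ha hb
    have hIpieces : ∀ i < n, IntervalIntegrable
        (fun s => f (xb s) ((m:ℝ) * s) - fbar (xb s)) volume (u i) (u (i+1)) :=
      fun i hi => hIfull (u i) (u (i+1)) (humem i hi.le) (humem (i+1) hi)
    have hsum := intervalIntegral.sum_integral_adjacent_intervals hIpieces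
    rw [hu0, hun] at hsum
    rw [← hsum]
    -- bound each piece
    have hpiece : ∀ i ∈ Finset.range n,
        ‖∫ s in u i..u (i+1), (f (xb s) ((m:ℝ) * s) - fbar (xb s))‖
          ≤ 2*K*ε'*(t/n) + M/m := by
      intro i hi
      rw [Finset.mem_range] at hi
      have hui := humem i hi.le
      have hui1 := humem (i+1) hi
      set z₀ := xb (u i) with hz₀def
      have hz₀R : ‖z₀ - ξ‖ ≤ Rb := hxbR _ hui
      have hIfro : IntervalIntegrable (fun s => f z₀ ((m:ℝ) * s) - fbar z₀)
          volume (u i) (u (i+1)) := by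
        refine IntervalIntegrable.sub ?_ intervalIntegrable_const
        have h0 := (hIz z₀ ((m:ℝ) * u i) ((m:ℝ) * u (i+1))).comp_mul_left (c := (m:ℝ))
        have h2 : ∀ y : ℝ, (m:ℝ) * y / m = y := fun y => mul_div_cancel_left₀ y hc0.ne'
        simpa [h2] using h0
      have hsplit : (∫ s in u i..u (i+1), (f (xb s) ((m:ℝ) * s) - fbar (xb s)))
          = (∫ s in u i..u (i+1),
              ((f (xb s) ((m:ℝ) * s) - fbar (xb s)) - (f z₀ ((m:ℝ) * s) - fbar z₀)))
            + ∫ s in u i..u (i+1), (f z₀ ((m:ℝ) * s) - fbar z₀) := by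
        rw [← intervalIntegral.integral_add (((hIpieces i hi).sub hIfro)) hIfro]
        congr 1; funext s; abel
      rw [hsplit]
      refine (norm_add_le _ _).trans (add_le_add ?_ ?_)
      · -- wobble term
        have hbnd : ∀ s ∈ Set.uIoc (u i) (u (i+1)),
            ‖(f (xb s) ((m:ℝ) * s) - fbar (xb s)) - (f z₀ ((m:ℝ) * s) - fbar z₀)‖
              ≤ 2*K*ε' := by
          intro s hs
          rw [Set.uIoc_of_le (humono i)] at hs
          have hsmem : s ∈ Icc (0:ℝ) T := by
            constructor
            · exact le_trans hui.1 hs.1.le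
            · exact le_trans hs.2 hui1.2
          have hdist : dist s (u i) < δ := by
            rw [Real.dist_eq, abs_of_nonneg (by linarith [hs.1.le] : (0:ℝ) ≤ s - u i)]
            have := hustep i
            have h2 : t/n ≤ T/n := by gcongr
            linarith [hs.2]
          have hnear : ‖xb s - z₀‖ < ε' := by
            have := hδ s hsmem (u i) hui hdist
            rwa [dist_eq_norm] at this
          have h1 : ‖f (xb s) ((m:ℝ)*s) - f z₀ ((m:ℝ)*s)‖ ≤ K * ‖xb s - z₀‖ := hlip _ _ _
          have h2 : ‖fbar (xb s) - fbar z₀‖ ≤ K * ‖xb s - z₀‖ := by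
            have := hfbarLip.dist_le_mul (xb s) z₀
            rwa [dist_eq_norm, dist_eq_norm] at this
          calc ‖(f (xb s) ((m:ℝ) * s) - fbar (xb s)) - (f z₀ ((m:ℝ) * s) - fbar z₀)‖
              = ‖(f (xb s) ((m:ℝ)*s) - f z₀ ((m:ℝ)*s)) - (fbar (xb s) - fbar z₀)‖ := by
                congr 1; abel
            _ ≤ ‖f (xb s) ((m:ℝ)*s) - f z₀ ((m:ℝ)*s)‖ + ‖fbar (xb s) - fbar z₀‖ :=
                norm_sub_le _ _
            _ ≤ 2*K*ε' := by nlinarith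
        have := intervalIntegral.norm_integral_le_of_norm_le_const hbnd
        calc ‖∫ s in u i..u (i+1),
              ((f (xb s) ((m:ℝ) * s) - fbar (xb s)) - (f z₀ ((m:ℝ) * s) - fbar z₀))‖
            ≤ 2*K*ε' * |u (i+1) - u i| := this
          _ = 2*K*ε' * (t/n) := by rw [hustep i, abs_of_nonneg (by positivity)]
      · -- frozen term via rescaling and oscillation bound
        have hcomp : (∫ s in u i..u (i+1), (f z₀ ((m:ℝ) * s) - fbar z₀))
            = ((m:ℝ))⁻¹ • ∫ τ in ((m:ℝ) * u i)..((m:ℝ) * u (i+1)), (f z₀ τ - fbar z₀) :=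
          intervalIntegral.integral_comp_mul_left (fun τ => f z₀ τ - fbar z₀) hc0.ne'
        rw [hcomp, norm_smul, Real.norm_eq_abs, abs_of_nonneg (by positivity)]
        have hle : (m:ℝ) * u i ≤ (m:ℝ) * u (i+1) := by
          have := humono i; nlinarith
        have := hosc z₀ hz₀R _ _ hle
        calc ((m:ℝ))⁻¹ * ‖∫ τ in ((m:ℝ) * u i)..((m:ℝ) * u (i+1)), (f z₀ τ - fbar z₀)‖
            ≤ ((m:ℝ))⁻¹ * M := by gcongr
          _ = M/m := by rw [inv_mul_eq_div]
    -- sum up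
    calc ‖∑ i ∈ Finset.range n, ∫ s in u i..u (i+1), (f (xb s) ((m:ℝ) * s) - fbar (xb s))‖
        ≤ ∑ i ∈ Finset.range n, ‖∫ s in u i..u (i+1), (f (xb s) ((m:ℝ) * s) - fbar (xb s))‖ :=
          norm_sum_le _ _
      _ ≤ ∑ _i ∈ Finset.range n, (2*K*ε'*(t/n) + M/m) := Finset.sum_le_sum hpiece
      _ = (n:ℝ) * (2*K*ε'*(t/n) + M/m) := by
            rw [Finset.sum_const, Finset.card_range, nsmul_eq_mul]
      _ = 2*K*ε'*t + (n:ℝ)*M/m := by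
            have hne : (n:ℝ) ≠ 0 := ne_of_gt hn0
            have hme : (m:ℝ) ≠ 0 := ne_of_gt hc0
            field_simp
      _ ≤ α := by
          have hb1 : 2*K*ε'*t ≤ α/2 := by
            nlinarith [hε'eq, mul_nonneg (mul_nonneg hK0 hε'0.le) (sub_nonneg.2 htT)]
          have hb2 : (n:ℝ)*M/m ≤ α/2 := by
            have hmge : 2*(n:ℝ)*M/α ≤ (m:ℝ) := by
              have h2 : (M₀:ℝ) ≤ (m:ℝ) := by exact_mod_cast hm
              linarith
            rw [div_le_iff₀ hc0]
            rw [div_le_iff₀ hα] at hmge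
            nlinarith
          linarith
  -- assemble via Gronwall
  rw [Metric.tendstoUniformlyOn_iff]
  intro ε hε
  have hexp : (0:ℝ) < Real.exp (K*T) := Real.exp_pos _
  set α : ℝ := ε / (2 * Real.exp (K*T)) with hαdef
  have hα : 0 < α := by positivity
  obtain ⟨M₀, hM₀1, hkey⟩ := key α hα
  rw [eventually_atTop]
  refine ⟨M₀, fun m hm => ?_⟩
  have hm1 : 1 ≤ m := le_trans hM₀1 hm
  have hc0 : (0:ℝ) < (m:ℝ) := by exact_mod_cast Nat.lt_of_lt_of_le Nat.zero_lt_one hm1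
  obtain ⟨hxmc, hxme'⟩ := hxm m
  have hxme : ∀ t ∈ Icc (0:ℝ) T, xm m t = ξ + ∫ s in (0:ℝ)..t, f (xm m s) ((m:ℝ) * s) :=
    hxme'
  -- continuous nonnegative deviation, extended to all of ℝ
  set proj : ℝ → ℝ := fun s => max 0 (min s T) with hprojdef
  have hprojc : Continuous proj := continuous_const.max (continuous_id.min continuous_const)
  have hprojmem : ∀ s, proj s ∈ Icc (0:ℝ) T := by
    intro s
    exact ⟨le_max_left _ _, max_le hT0 (min_le_right _ _)⟩
  have hprojid : ∀ s ∈ Icc (0:ℝ) T, proj s = s := by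
    intro s hs
    simp only [hprojdef]
    rw [min_eq_left hs.2, max_eq_right hs.1]
  set φ : ℝ → ℝ := fun s => ‖xm m (proj s) - xb (proj s)‖ with hφdef
  have hφc : Continuous φ := by
    refine Continuous.norm (Continuous.sub ?_ ?_)
    · exact hxmc.comp_continuous hprojc hprojmem
    · exact hxbc.comp_continuous hprojc hprojmem
  have hφ0 : ∀ s, 0 ≤ φ s := fun s => norm_nonneg _
  have hineq : ∀ τ ∈ Icc (0:ℝ) T, φ τ ≤ α + K * ∫ s in (0:ℝ)..τ, φ s := by
    intro τ hτ
    have h0τ : (0:ℝ) ∈ Icc (0:ℝ) T := ⟨le_refl _, hT0⟩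
    have hτ' : Icc (0:ℝ) τ ⊆ Icc (0:ℝ) T := Icc_subset_Icc (le_refl _) hτ.2
    have hIm : IntervalIntegrable (fun s => f (xm m s) ((m:ℝ)*s)) volume 0 τ :=
      hIcomp (xm m) hxmc _ hc0.ne' 0 τ h0τ hτ
    have hIbb : IntervalIntegrable (fun s => f (xb s) ((m:ℝ)*s)) volume 0 τ :=
      hIcomp xb hxbc _ hc0.ne' 0 τ h0τ hτ
    have hIfb : IntervalIntegrable (fun s => fbar (xb s)) volume 0 τ := by
      refine ContinuousOn.intervalIntegrable ?_
      exact hfbar_cont.comp_continuousOn (hxbc.mono (Set.uIcc_subset_Icc h0τ hτ))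
    have hdiff : xm m τ - xb τ
        = (∫ s in (0:ℝ)..τ, (f (xm m s) ((m:ℝ)*s) - f (xb s) ((m:ℝ)*s)))
          + ∫ s in (0:ℝ)..τ, (f (xb s) ((m:ℝ)*s) - fbar (xb s)) := by
      rw [hxme τ hτ, hxbe τ hτ, intervalIntegral.integral_sub hIm hIbb,
        intervalIntegral.integral_sub hIbb hIfb]
      abel
    have hφτ : φ τ = ‖xm m τ - xb τ‖ := by
      simp only [hφdef]; rw [hprojid τ hτ]
    have hA : ‖∫ s in (0:ℝ)..τ, (f (xb s) ((m:ℝ)*s) - fbar (xb s))‖ ≤ α :=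
      hkey m hm τ hτ
    have hB : ‖∫ s in (0:ℝ)..τ, (f (xm m s) ((m:ℝ)*s) - f (xb s) ((m:ℝ)*s))‖
        ≤ K * ∫ s in (0:ℝ)..τ, φ s := by
      refine le_trans (intervalIntegral.norm_integral_le_integral_norm hτ.1) ?_
      have hmono : (∫ s in (0:ℝ)..τ, ‖f (xm m s) ((m:ℝ)*s) - f (xb s) ((m:ℝ)*s)‖)
          ≤ ∫ s in (0:ℝ)..τ, (K:ℝ) * φ s := by
        refine intervalIntegral.integral_mono_on hτ.1 ?_ ?_ ?_
        · exact (hIm.sub hIbb).norm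
        · exact (continuous_const.mul hφc).intervalIntegrable _ _
        · intro s hs
          have hsmem : s ∈ Icc (0:ℝ) T := hτ' hs
          have h1 := hlip ((m:ℝ)*s) (xm m s) (xb s)
          simp only [hφdef]
          rw [hprojid s hsmem]
          exact h1
      rwa [intervalIntegral.integral_const_mul] at hmono
    rw [hφτ, hdiff]
    refine le_trans (norm_add_le _ _) ?_
    linarith
  have hg := gronwall_integral hφc hφ0 hα.le K.coe_nonneg hineq
  intro t ht
  have hφt := hg t ht
  have heq : φ t = dist (xb t) (xm m t) := by
    simp only [hφdef]
    rw [hprojid t ht, dist_eq_norm, norm_sub_rev]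
  have hαe : α * Real.exp (K*T) = ε/2 := by
    rw [hαdef]
    field_simp
  rw [heq, hαe] at hφt
  calc dist (xb t) (xm m t) ≤ ε/2 := hφt
    _ < ε := by linarith
end
end
end

section
/- Let N=1, D=[−1,1], and F:D→ℝ defined by F(ξ)=−ξ. Then for every continuous f:ℝ×[0,T]→ℝ with Lip(f)<∞, one has sup_{ξ∈D}|F(ξ) − S_f(T)ξ| ≥ 1. In particular, the map ξ↦−ξ cannot be approximated in the sup-norm by any ODENet. -/
open MeasureTheory Set intervalIntegral Bornology Filter
open scoped ENNReal NNReal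

noncomputable section

/-- The map `ξ ↦ −ξ` cannot be approximated by an ODENet, `N = 1`.
Let `D = [−1,1]` and `F(ξ) = −ξ`. For every continuous `f : ℝ × [0,T] → ℝ`, Lipschitz in
`x` uniformly in `t ∈ [0,T]`, the ODENet `S_f(T)` satisfies
`sup_{ξ∈D} |F(ξ) − S_f(T)ξ| ≥ 1`, i.e. for every `ε > 0` there is `ξ ∈ D` with
`|(−ξ) − S_f(T)ξ| > 1 − ε`. -/
theorem no_uap_reflection (T : ℝ) (hT : 0 < T)
    (f : ℝ → ℝ → ℝ) (hfc : Continuous (Function.uncurry f))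
    (K : ℝ≥0) (hfl : ∀ t ∈ Set.Icc (0 : ℝ) T, LipschitzWith K (fun z => f z t))
    (x : ℝ → ℝ → ℝ)
    (hx : ∀ ξ ∈ Set.Icc (-1 : ℝ) 1,
      ContinuousOn (x ξ) (Set.Icc 0 T) ∧
        ∀ t ∈ Set.Icc (0 : ℝ) T, x ξ t = ξ + ∫ s in (0 : ℝ)..t, f (x ξ s) s) :
    ∀ ε > (0 : ℝ), ∃ ξ ∈ Set.Icc (-1 : ℝ) 1, 1 - ε < |(-ξ) - x ξ T| := by
  -- continuity of the composed integrand
  have hgc : ∀ ξ ∈ Set.Icc (-1 : ℝ) 1,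
      ContinuousOn (fun s => f (x ξ s) s) (Set.Icc 0 T) := by
    intro ξ hξ
    exact hfc.comp_continuousOn (((hx ξ hξ).1).prodMk continuousOn_id)
  -- initial values
  have hx0 : ∀ ξ ∈ Set.Icc (-1 : ℝ) 1, x ξ 0 = ξ := by
    intro ξ hξ
    have := (hx ξ hξ).2 0 ⟨le_rfl, hT.le⟩
    simpa using this
  -- derivative within `Icc 0 T`
  have hderiv : ∀ ξ ∈ Set.Icc (-1 : ℝ) 1, ∀ t ∈ Set.Icc (0 : ℝ) T,
      HasDerivWithinAt (x ξ) (f (x ξ t) t) (Set.Icc 0 T) t := by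
    intro ξ hξ t ht
    haveI : Fact (t ∈ Set.Icc (0 : ℝ) T) := ⟨ht⟩
    have hint : IntervalIntegrable (fun s => f (x ξ s) s) volume 0 t := by
      apply ContinuousOn.intervalIntegrable
      apply (hgc ξ hξ).mono
      rw [Set.uIcc_of_le ht.1]
      exact Set.Icc_subset_Icc le_rfl ht.2
    have hmeas : StronglyMeasurableAtFilter (fun s => f (x ξ s) s)
        (nhdsWithin t (Set.Icc 0 T)) volume :=
      (hgc ξ hξ).stronglyMeasurableAtFilter_nhdsWithin measurableSet_Icc t
    have hG : HasDerivWithinAt (fun u => ξ + ∫ s in (0:ℝ)..u, f (x ξ s) s)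
        (f (x ξ t) t) (Set.Icc 0 T) t :=
      (intervalIntegral.integral_hasDerivWithinAt_right hint hmeas
        ((hgc ξ hξ) t ht)).const_add ξ
    exact hG.congr (fun u hu => (hx ξ hξ).2 u hu) ((hx ξ hξ).2 t ht)
  have hm1 : (-1 : ℝ) ∈ Set.Icc (-1 : ℝ) 1 := ⟨le_rfl, by norm_num⟩
  have hp1 : (1 : ℝ) ∈ Set.Icc (-1 : ℝ) 1 := ⟨by norm_num, le_rfl⟩
  -- monotonicity (non-crossing) of the flow: x (-1) T ≤ x 1 T
  have hmono : x (-1) T ≤ x 1 T := by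
    by_contra hlt
    push_neg at hlt
    set φ : ℝ → ℝ := fun t => x 1 t - x (-1) t with hφ
    have hφc : ContinuousOn φ (Set.Icc 0 T) := (hx 1 hp1).1.sub (hx (-1) hm1).1
    have hφ0 : φ 0 = 2 := by simp [hφ, hx0 1 hp1, hx0 (-1) hm1]; norm_num
    have hφT : φ T < 0 := by simp [hφ]; linarith
    have h0mem : (0 : ℝ) ∈ Set.Icc (φ T) (φ 0) := ⟨hφT.le, by rw [hφ0]; norm_num⟩
    obtain ⟨t0, ht0, hval⟩ := intermediate_value_Icc' hT.le hφc h0mem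
    have ht0pos : 0 < t0 := by
      rcases lt_or_eq_of_le ht0.1 with h | h
      · exact h
      · exfalso; rw [← h] at hval; rw [hφ0] at hval; norm_num at hval
    -- backward uniqueness on [0, t0] gives x 1 0 = x (-1) 0, contradiction
    set v : ℝ → ℝ → ℝ := fun t z => f z (max 0 (min t T)) with hv
    have hvlip : ∀ t, LipschitzOnWith K (v t) Set.univ := by
      intro t
      apply LipschitzWith.lipschitzOnWith
      exact hfl _ ⟨le_max_left _ _, max_le hT.le (min_le_right _ _)⟩
    have hclamp : ∀ t ∈ Set.Ioc (0 : ℝ) t0, max 0 (min t T) = t := by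
      intro t htm
      rw [min_eq_left (htm.2.trans ht0.2), max_eq_right htm.1.le]
    have hIcc_mem : ∀ t ∈ Set.Ioc (0 : ℝ) t0, Set.Icc (0:ℝ) T ∈ nhdsWithin t (Set.Iic t) := by
      intro t htm
      rw [mem_nhdsWithin]
      refine ⟨Set.Ioi 0, isOpen_Ioi, htm.1, ?_⟩
      rintro u ⟨hu1, hu2⟩
      exact ⟨le_of_lt hu1, le_trans hu2 (htm.2.trans ht0.2)⟩
    have hder : ∀ ξ, ξ ∈ Set.Icc (-1:ℝ) 1 → ∀ t ∈ Set.Ioc (0 : ℝ) t0,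
        HasDerivWithinAt (x ξ) (v t (x ξ t)) (Set.Iic t) t := by
      intro ξ hξ t htm
      have htT : t ∈ Set.Icc (0:ℝ) T := ⟨htm.1.le, htm.2.trans ht0.2⟩
      have := (hderiv ξ hξ t htT).mono_of_mem_nhdsWithin (hIcc_mem t htm)
      simpa [hv, hclamp t htm] using this
    have hcont : ∀ ξ, ξ ∈ Set.Icc (-1:ℝ) 1 → ContinuousOn (x ξ) (Set.Icc 0 t0) :=
      fun ξ hξ => (hx ξ hξ).1.mono (Set.Icc_subset_Icc le_rfl ht0.2)
    have heq : Set.EqOn (x 1) (x (-1)) (Set.Icc 0 t0) :=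
      ODE_solution_unique_of_mem_Icc_left (fun t _ => hvlip t)
        (hcont 1 hp1) (hder 1 hp1) (fun _ _ => Set.mem_univ _)
        (hcont (-1) hm1) (hder (-1) hm1) (fun _ _ => Set.mem_univ _)
        (by have := hval; simp [hφ] at this; linarith [this])
    have := heq ⟨le_rfl, ht0.1⟩
    rw [hx0 1 hp1, hx0 (-1) hm1] at this
    norm_num at this
  -- conclude
  intro ε hε
  set a := x (-1) T with ha
  set b := x 1 T with hb
  rcases le_or_gt 1 |1 - a| with h | h
  · exact ⟨-1, hm1, by rw [neg_neg]; linarith⟩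
  · refine ⟨1, hp1, ?_⟩
    have hb1 : 1 ≤ |(-1 : ℝ) - b| := by
      rcases abs_lt.mp h with ⟨h1, h2⟩
      have : 0 < a := by linarith
      have : 0 < b := lt_of_lt_of_le this hmono
      rw [abs_of_nonpos (by linarith)]
      linarith
    linarith
end
end

section
/- Let D⊂ℝ^N be bounded and closed, let σ:ℝ→ℝ be continuous with Lip(σ)<∞, and let α,ᾱ,γ,γ̄∈L^∞(0,T;ℝ^N) and β,β̄∈L^∞(0,T;ℝ^{N×N}) be measurable and bounded. Define h(x,t):=α(t)⊙𝛔(β(t)x+γ(t)) and h̄(x,t):=ᾱ(t)⊙𝛔(β̄(t)x+γ̄(t)), and suppose M₁,M₂>0 satisfy |S_h(t)ξ|≤M₁ and |𝛔(β(t)S_h(t)ξ+γ(t))|≤M₂ for all ξ∈D and 0≤t≤T. Set M₃:=M₂+(M₁+1)‖ᾱ‖_{L^∞}Lip(σ) and M₄:=‖ᾱ‖_{L^∞}‖β̄‖_{L^∞}Lip(σ). If ‖α−ᾱ‖_{L¹(0,T)}<ε′, ‖β−β̄‖_{L¹(0,T)}<ε′ and ‖γ−γ̄‖_{L¹(0,T)}<ε′,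 then sup_{ξ∈D}|S_h(t)ξ − S_{h̄}(t)ξ| ≤ M₃·ε′·e^{M₄T} for all 0≤t≤T. -/
open MeasureTheory Set intervalIntegral Bornology Filter
open scoped ENNReal NNReal

noncomputable section

/-- Hadamard (componentwise) product of two vectors. -/
def had {N : ℕ} (a b : EuclideanSpace ℝ (Fin N)) : EuclideanSpace ℝ (Fin N) :=
  WithLp.toLp 2 (fun i => a i * b i)

/-- Componentwise application of a scalar function `σ : ℝ → ℝ` to a vector. -/
def vecσ {N : ℕ} (σ : ℝ → ℝ) (x : EuclideanSpace ℝ (Fin N)) : EuclideanSpace ℝ (Fin N) :=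
  WithLp.toLp 2 (fun i => σ (x i))

/-- Action of an `N × N` matrix on a vector: `(A x)ᵢ = ∑ⱼ Aᵢⱼ xⱼ`. -/
def mvec {N : ℕ} (A : Matrix (Fin N) (Fin N) ℝ) (x : EuclideanSpace ℝ (Fin N)) :
    EuclideanSpace ℝ (Fin N) :=
  WithLp.toLp 2 (fun i => ∑ j, A i j * x j)

/-- Euclidean operator norm of a matrix. -/
def matNorm {N : ℕ} (A : Matrix (Fin N) (Fin N) ℝ) : ℝ :=
  ‖(Matrix.toEuclideanCLM (𝕜 := ℝ) A :
      EuclideanSpace ℝ (Fin N) →L[ℝ] EuclideanSpace ℝ (Fin N))‖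

/-! ### Auxiliary lemmas -/

lemma sq_coord_le {N : ℕ} (b : EuclideanSpace ℝ (Fin N)) (i : Fin N) : ‖b i‖^2 ≤ ‖b‖^2 := by
  rw [EuclideanSpace.norm_eq, Real.sq_sqrt (by positivity)]
  exact Finset.single_le_sum (f := fun j => ‖b j‖^2) (fun j _ => by positivity) (Finset.mem_univ i)

lemma norm_had_le {N : ℕ} (a b : EuclideanSpace ℝ (Fin N)) : ‖had a b‖ ≤ ‖a‖ * ‖b‖ := by
  rw [EuclideanSpace.norm_eq]
  have h : ‖a‖ * ‖b‖ = Real.sqrt ((‖a‖*‖b‖)^2) := by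
    rw [Real.sqrt_sq (by positivity)]
  rw [h]
  apply Real.sqrt_le_sqrt
  have key : ∀ i, ‖had a b i‖ ^ 2 ≤ ‖b‖^2 * ‖a i‖^2 := by
    intro i
    have h1 : ‖had a b i‖ = ‖a i‖ * ‖b i‖ := by simp [had, abs_mul]
    rw [h1, mul_pow]
    have : ‖b i‖^2 ≤ ‖b‖^2 := sq_coord_le b i
    nlinarith [sq_nonneg (‖a i‖)]
  calc ∑ i, ‖had a b i‖ ^ 2 ≤ ∑ i, ‖b‖^2 * ‖a i‖^2 := Finset.sum_le_sum fun i _ => key i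
    _ = ‖b‖^2 * ∑ i, ‖a i‖^2 := by rw [Finset.mul_sum]
    _ = (‖a‖*‖b‖)^2 := by
        rw [show ∑ i, ‖a i‖^2 = ‖a‖^2 by
          rw [EuclideanSpace.norm_eq, Real.sq_sqrt (by positivity)]]
        ring

lemma norm_vecσ_sub_le {N : ℕ} {σ : ℝ → ℝ} {Kσ : ℝ≥0} (hσl : LipschitzWith Kσ σ)
    (v w : EuclideanSpace ℝ (Fin N)) : ‖vecσ σ v - vecσ σ w‖ ≤ (Kσ:ℝ) * ‖v - w‖ := by
  rw [EuclideanSpace.norm_eq, EuclideanSpace.norm_eq,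
    ← Real.sqrt_sq (by positivity : (0:ℝ) ≤ (Kσ:ℝ)), ← Real.sqrt_mul (by positivity)]
  apply Real.sqrt_le_sqrt
  rw [Finset.mul_sum]
  apply Finset.sum_le_sum
  intro i _
  have h1 : (vecσ σ v - vecσ σ w) i = σ (v i) - σ (w i) := by simp [vecσ]
  have h2 : ((v - w) i) = v i - w i := by simp
  rw [h1, h2]
  have := hσl.dist_le_mul (v i) (w i)
  rw [Real.dist_eq, Real.dist_eq] at this
  have h3 : ‖σ (v i) - σ (w i)‖ ≤ (Kσ:ℝ) * ‖v i - w i‖ := by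
    simpa [Real.norm_eq_abs] using this
  nlinarith [norm_nonneg (σ (v i) - σ (w i)), norm_nonneg (v i - w i), NNReal.coe_nonneg Kσ]

lemma mvec_eq_clm {N : ℕ} (A : Matrix (Fin N) (Fin N) ℝ) (v : EuclideanSpace ℝ (Fin N)) :
    mvec A v = Matrix.toEuclideanCLM (𝕜 := ℝ) A v := by
  ext i
  simp [mvec, Matrix.toEuclideanCLM, Matrix.mulVec, dotProduct]
  rfl

lemma norm_mvec_le {N : ℕ} (A : Matrix (Fin N) (Fin N) ℝ) (v : EuclideanSpace ℝ (Fin N)) :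
    ‖mvec A v‖ ≤ matNorm A * ‖v‖ := by
  rw [mvec_eq_clm]; exact (Matrix.toEuclideanCLM (𝕜 := ℝ) A).le_opNorm v

lemma matNorm_nonneg {N : ℕ} (A : Matrix (Fin N) (Fin N) ℝ) : 0 ≤ matNorm A :=
  norm_nonneg _

lemma matNorm_sub_le {N : ℕ} (A B : Matrix (Fin N) (Fin N) ℝ) :
    matNorm (A - B) ≤ matNorm A + matNorm B := by
  unfold matNorm
  rw [map_sub]
  exact norm_sub_le _ _

lemma mvec_sub_left {N : ℕ} (A B : Matrix (Fin N) (Fin N) ℝ) (v : EuclideanSpace ℝ (Fin N)) :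
    mvec (A - B) v = mvec A v - mvec B v := by
  ext i
  simp [mvec, sub_mul, Finset.sum_sub_distrib]

lemma mvec_sub_right {N : ℕ} (A : Matrix (Fin N) (Fin N) ℝ) (u v : EuclideanSpace ℝ (Fin N)) :
    mvec A (u - v) = mvec A u - mvec A v := by
  ext i
  simp [mvec, mul_sub, Finset.sum_sub_distrib]

lemma had_decomp {N : ℕ} (a a' b b' : EuclideanSpace ℝ (Fin N)) :
    had a b - had a' b' = had (a - a') b + had a' (b - b') := by
  ext i
  simp [had]
  ring

lemma matNorm_continuous {N : ℕ} : Continuous (matNorm (N := N)) := by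
  have h : Continuous fun A : Matrix (Fin N) (Fin N) ℝ =>
      (Matrix.toEuclideanCLM (𝕜 := ℝ) A :
        EuclideanSpace ℝ (Fin N) →L[ℝ] EuclideanSpace ℝ (Fin N)) := by
    let L : Matrix (Fin N) (Fin N) ℝ →ₗ[ℝ]
        (EuclideanSpace ℝ (Fin N) →L[ℝ] EuclideanSpace ℝ (Fin N)) :=
      { toFun := fun A => Matrix.toEuclideanCLM (𝕜 := ℝ) A
        map_add' := fun A B => map_add _ A B
        map_smul' := fun c A => map_smul (Matrix.toEuclideanCLM (𝕜 := ℝ)) c A }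
    exact L.continuous_of_finiteDimensional.congr fun A => rfl
  exact continuous_norm.comp h

lemma matNorm_measurable {N : ℕ} (β : ℝ → Matrix (Fin N) (Fin N) ℝ)
    (hmβ : Measurable fun t => fun i j : Fin N => β t i j) :
    Measurable fun t => matNorm (β t) := by
  have hg : Measurable fun m : Fin N → Fin N → ℝ => matNorm (Matrix.of m) := by
    have hco : Continuous fun m : Fin N → Fin N → ℝ =>
        (Matrix.of m : Matrix (Fin N) (Fin N) ℝ) := continuous_id
    exact (matNorm_continuous.comp hco).measurable
  exact hg.comp hmβ

lemma rhs_measurable {N : ℕ} (σ : ℝ → ℝ) (hσc : Continuous σ)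
    (α γ : ℝ → EuclideanSpace ℝ (Fin N)) (β : ℝ → Matrix (Fin N) (Fin N) ℝ)
    (hmα : Measurable α) (hmγ : Measurable γ)
    (hmβ : Measurable fun t => fun i j : Fin N => β t i j)
    (X : ℝ → EuclideanSpace ℝ (Fin N)) (hX : Continuous X) :
    Measurable (fun s => had (α s) (vecσ σ (mvec (β s) (X s) + γ s))) := by
  have hXm : Measurable X := hX.measurable
  show Measurable fun s => WithLp.toLp 2 (fun i => α s i * σ (∑ j, β s i j * X s j + γ s i))
  apply (WithLp.measurable_toLp 2 _).comp
  apply measurable_pi_iff.2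
  intro i
  have h1 : Measurable fun s => α s i :=
    (measurable_pi_apply i).comp ((WithLp.measurable_ofLp 2 _).comp hmα)
  have h2 : Measurable fun s => γ s i :=
    (measurable_pi_apply i).comp ((WithLp.measurable_ofLp 2 _).comp hmγ)
  have h3 : Measurable fun s => ∑ j, β s i j * X s j := by
    apply Finset.measurable_sum
    intro j _
    have hb : Measurable fun s => β s i j :=
      ((measurable_pi_apply j).comp ((measurable_pi_apply i).comp hmβ))
    exact hb.mul ((measurable_pi_apply j).comp ((WithLp.measurable_ofLp 2 _).comp hXm))
  exact h1.mul (hσc.measurable.comp (h3.add h2))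

lemma gronwall_aux {u : ℝ → ℝ} {T A K : ℝ} (hu : Continuous u)
    (hu0 : ∀ t, 0 ≤ u t) (hA : 0 ≤ A) (hK : 0 ≤ K)
    (hineq : ∀ t ∈ Icc (0:ℝ) T, u t ≤ A + K * ∫ s in (0:ℝ)..t, u s) :
    ∀ t ∈ Icc (0:ℝ) T, u t ≤ A * Real.exp (K * T) := by
  set w : ℝ → ℝ := fun t => ∫ s in (0:ℝ)..t, u s with hw
  have hw' : ∀ t, HasDerivAt w (u t) t := fun t =>
    intervalIntegral.integral_hasDerivAt_right (hu.intervalIntegrable 0 t)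
      (hu.stronglyMeasurableAtFilter _ _) hu.continuousAt
  have hwpos : ∀ t ∈ Icc (0:ℝ) T, 0 ≤ w t := fun t ht =>
    intervalIntegral.integral_nonneg ht.1 (fun s _ => hu0 s)
  have key : ∀ t ∈ Icc (0:ℝ) T, ‖w t‖ ≤ gronwallBound 0 K A (t - 0) := by
    apply norm_le_gronwallBound_of_norm_deriv_right_le (f := w) (f' := u)
    · exact fun t _ => (hw' t).continuousAt.continuousWithinAt
    · exact fun t _ => (hw' t).hasDerivWithinAt
    · simp [hw]
    · intro t ht
      have h1 := hineq t ⟨ht.1, le_of_lt ht.2⟩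
      have h2 : 0 ≤ w t := hwpos t ⟨ht.1, le_of_lt ht.2⟩
      rw [Real.norm_eq_abs, Real.norm_eq_abs, abs_of_nonneg (hu0 t), abs_of_nonneg h2]
      linarith
  intro t ht
  have h1 := hineq t ht
  have h2 := key t ht
  rw [Real.norm_eq_abs, abs_of_nonneg (hwpos t ht)] at h2
  have h3 : u t ≤ A + K * gronwallBound 0 K A (t - 0) := by nlinarith
  rcases eq_or_lt_of_le hK with hK0 | hKpos
  · rw [← hK0] at h3 ⊢
    rw [gronwallBound_K0] at h3
    simp at h3 ⊢
    linarith
  · rw [gronwallBound_of_K_ne_0 (ne_of_gt hKpos)] at h3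
    have he : A + K * (0 * Real.exp (K * (t - 0)) + A / K * (Real.exp (K * (t - 0)) - 1))
        = A * Real.exp (K * t) := by
      field_simp
      ring
    rw [he] at h3
    refine h3.trans ?_
    have : Real.exp (K * t) ≤ Real.exp (K * T) :=
      Real.exp_le_exp.mpr (by nlinarith [ht.2])
    nlinarith [Real.exp_pos (K*t)]

lemma pointwise_bound {N : ℕ} {σ : ℝ → ℝ} {Kσ : ℝ≥0} (hσl : LipschitzWith Kσ σ)
    (a ab g gb : EuclideanSpace ℝ (Fin N)) (B Bb : Matrix (Fin N) (Fin N) ℝ)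
    (Xs Xbs : EuclideanSpace ℝ (Fin N)) {M₁ M₂ Aα Bβ : ℝ}
    (hV : ‖vecσ σ (mvec B Xs + g)‖ ≤ M₂) (hXs : ‖Xs‖ ≤ M₁)
    (hab : ‖ab‖ ≤ Aα) (hBb : matNorm Bb ≤ Bβ) (hAα0 : 0 ≤ Aα) :
    ‖had a (vecσ σ (mvec B Xs + g)) - had ab (vecσ σ (mvec Bb Xbs + gb))‖ ≤
      M₂ * ‖a - ab‖ + Aα * (Kσ:ℝ) * M₁ * matNorm (B - Bb) + Aα * (Kσ:ℝ) * ‖g - gb‖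
        + (Aα * Bβ * (Kσ:ℝ)) * ‖Xs - Xbs‖ := by
  set V := vecσ σ (mvec B Xs + g) with hVdef
  set W := vecσ σ (mvec Bb Xbs + gb) with hWdef
  have hdec : had a V - had ab W = had (a - ab) V + had ab (V - W) := had_decomp a ab V W
  have hdiff : (mvec B Xs + g) - (mvec Bb Xbs + gb)
      = mvec (B - Bb) Xs + mvec Bb (Xs - Xbs) + (g - gb) := by
    rw [mvec_sub_left, mvec_sub_right]; abel
  have hKσ0 : (0:ℝ) ≤ (Kσ:ℝ) := Kσ.coe_nonneg
  have hmn0 : 0 ≤ matNorm (B - Bb) := matNorm_nonneg _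
  have hd0 : 0 ≤ ‖Xs - Xbs‖ := norm_nonneg _
  have h1 : ‖had (a - ab) V‖ ≤ ‖a - ab‖ * M₂ :=
    (norm_had_le _ _).trans (mul_le_mul_of_nonneg_left hV (norm_nonneg _))
  have hinner : ‖(mvec B Xs + g) - (mvec Bb Xbs + gb)‖
      ≤ matNorm (B - Bb) * M₁ + Bβ * ‖Xs - Xbs‖ + ‖g - gb‖ := by
    rw [hdiff]
    refine (norm_add_le _ _).trans ?_
    refine add_le_add ((norm_add_le _ _).trans (add_le_add ?_ ?_)) le_rfl
    · exact (norm_mvec_le _ _).trans (mul_le_mul_of_nonneg_left hXs hmn0)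
    · exact (norm_mvec_le _ _).trans (mul_le_mul_of_nonneg_right hBb hd0)
  have h2 : ‖had ab (V - W)‖
      ≤ Aα * ((Kσ:ℝ) * (matNorm (B - Bb) * M₁ + Bβ * ‖Xs - Xbs‖ + ‖g - gb‖)) := by
    refine (norm_had_le _ _).trans ?_
    have hVW : ‖V - W‖ ≤ (Kσ:ℝ) * (matNorm (B - Bb) * M₁ + Bβ * ‖Xs - Xbs‖ + ‖g - gb‖) :=
      (norm_vecσ_sub_le hσl _ _).trans (mul_le_mul_of_nonneg_left hinner hKσ0)
    exact mul_le_mul hab hVW (norm_nonneg _) hAα0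
  calc ‖had a V - had ab W‖ = ‖had (a - ab) V + had ab (V - W)‖ := by rw [hdec]
    _ ≤ ‖had (a - ab) V‖ + ‖had ab (V - W)‖ := norm_add_le _ _
    _ ≤ ‖a - ab‖ * M₂
        + Aα * ((Kσ:ℝ) * (matNorm (B - Bb) * M₁ + Bβ * ‖Xs - Xbs‖ + ‖g - gb‖)) :=
      add_le_add h1 h2
    _ ≤ _ := by nlinarith [norm_nonneg (g - gb)]

set_option maxHeartbeats 2000000 in
/-- Stability of the flow under `L¹` perturbation of the coefficients.
With `h(x,t) = α(t)⊙𝛔(β(t)x+γ(t))` and `h̄(x,t) = ᾱ(t)⊙𝛔(β̄(t)x+γ̄(t))`, bounded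
measurable coefficients, flow bounds `M₁, M₂` for `S_h` on `D`, `‖ᾱ‖_{L^∞} ≤ Aα`,
`‖β̄‖_{L^∞} ≤ Bβ` (operator norm), `M₃ = M₂ + (M₁+1)·Aα·Lip(σ)`,
`M₄ = Aα·Bβ·Lip(σ)`: if the `L¹(0,T)` distances of the coefficients are `< ε′`, then
`‖S_h(t)ξ − S_{h̄}(t)ξ‖ ≤ M₃·ε′·e^{M₄T}` for all `ξ ∈ D`, `t ∈ [0,T]`. -/
theorem coefficient_L1_stability {N : ℕ} (T : ℝ) (hT : 0 < T)
    (D : Set (EuclideanSpace ℝ (Fin N))) (hDb : IsBounded D) (hDc : IsClosed D)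
    (σ : ℝ → ℝ) (hσc : Continuous σ) (Kσ : ℝ≥0) (hσl : LipschitzWith Kσ σ)
    (α αb γ γb : ℝ → EuclideanSpace ℝ (Fin N)) (β βb : ℝ → Matrix (Fin N) (Fin N) ℝ)
    (hmα : Measurable α) (hmαb : Measurable αb) (hmγ : Measurable γ)
    (hmγb : Measurable γb) (hmβ : Measurable fun t => fun i j : Fin N => β t i j)
    (hmβb : Measurable fun t => fun i j : Fin N => βb t i j)
    (hbdd : ∃ C : ℝ, ∀ᵐ t ∂(volume.restrict (Set.Ioc (0 : ℝ) T)),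
      ‖α t‖ ≤ C ∧ ‖γ t‖ ≤ C ∧ ‖γb t‖ ≤ C ∧ matNorm (β t) ≤ C)
    (Aα : ℝ) (hAα : ∀ᵐ t ∂(volume.restrict (Set.Ioc (0 : ℝ) T)), ‖αb t‖ ≤ Aα)
    (Bβ : ℝ) (hBβ : ∀ᵐ t ∂(volume.restrict (Set.Ioc (0 : ℝ) T)), matNorm (βb t) ≤ Bβ)
    (x xb : EuclideanSpace ℝ (Fin N) → ℝ → EuclideanSpace ℝ (Fin N))
    (hx : ∀ ξ ∈ D, IsSol (fun z t => had (α t) (vecσ σ (mvec (β t) z + γ t))) T ξ (x ξ))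
    (hxb : ∀ ξ ∈ D,
      IsSol (fun z t => had (αb t) (vecσ σ (mvec (βb t) z + γb t))) T ξ (xb ξ))
    (M₁ M₂ : ℝ) (hM₁pos : 0 < M₁) (hM₂pos : 0 < M₂)
    (hM₁ : ∀ ξ ∈ D, ∀ t ∈ Set.Icc (0 : ℝ) T, ‖x ξ t‖ ≤ M₁)
    (hM₂ : ∀ ξ ∈ D, ∀ t ∈ Set.Icc (0 : ℝ) T, ‖vecσ σ (mvec (β t) (x ξ t) + γ t)‖ ≤ M₂)
    (ε' : ℝ)
    (hα1 : (∫ t in (0 : ℝ)..T, ‖α t - αb t‖) < ε')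
    (hβ1 : (∫ t in (0 : ℝ)..T, matNorm (β t - βb t)) < ε')
    (hγ1 : (∫ t in (0 : ℝ)..T, ‖γ t - γb t‖) < ε') :
    ∀ ξ ∈ D, ∀ t ∈ Set.Icc (0 : ℝ) T,
      ‖x ξ t - xb ξ t‖ ≤
        (M₂ + (M₁ + 1) * Aα * (Kσ : ℝ)) * ε' * Real.exp ((Aα * Bβ * (Kσ : ℝ)) * T) := by
  -- nondegeneracy of the restricted measure
  have hres : (volume.restrict (Set.Ioc (0:ℝ) T)) ≠ 0 := by
    rw [Ne, Measure.restrict_eq_zero]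
    simp [Real.volume_Ioc, hT, ENNReal.ofReal_eq_zero, not_le]
  haveI : (ae (volume.restrict (Set.Ioc (0:ℝ) T))).NeBot := ae_neBot.mpr hres
  have hAα0 : 0 ≤ Aα := by
    obtain ⟨t, ht⟩ := hAα.exists; exact (norm_nonneg _).trans ht
  have hBβ0 : 0 ≤ Bβ := by
    obtain ⟨t, ht⟩ := hBβ.exists; exact (matNorm_nonneg _).trans ht
  have hKσ0 : (0:ℝ) ≤ (Kσ:ℝ) := Kσ.coe_nonneg
  have hε0 : 0 < ε' :=
    lt_of_le_of_lt (intervalIntegral.integral_nonneg hT.le (fun s _ => norm_nonneg _)) hα1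
  have hK0 : 0 ≤ Aα * Bβ * (Kσ:ℝ) := by positivity
  have hM₃0 : 0 ≤ M₂ + (M₁ + 1) * Aα * (Kσ:ℝ) := by
    have := mul_nonneg (mul_nonneg (by linarith : (0:ℝ) ≤ M₁ + 1) hAα0) hKσ0
    linarith
  have hA0 : 0 ≤ (M₂ + (M₁ + 1) * Aα * (Kσ:ℝ)) * ε' := by positivity
  intro ξ hξ
  obtain ⟨hxc, hxeq⟩ := hx ξ hξ
  obtain ⟨hxbc, hxbeq⟩ := hxb ξ hξ
  obtain ⟨C, hC⟩ := hbdd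
  have hC0 : 0 ≤ C := by
    obtain ⟨t, ht⟩ := hC.exists; exact (norm_nonneg _).trans ht.1
  -- clamping to [0,T]
  set π : ℝ → ℝ := fun s => max 0 (min s T) with hπdef
  have hπc : Continuous π := continuous_const.max (continuous_id.min continuous_const)
  have hπmem : ∀ s, π s ∈ Icc (0:ℝ) T := fun s =>
    ⟨le_max_left _ _, max_le hT.le (min_le_right _ _)⟩
  have hπid : ∀ s ∈ Icc (0:ℝ) T, π s = s := fun s hs => by
    simp only [hπdef]
    rw [min_eq_left hs.2, max_eq_right hs.1]
  set X : ℝ → EuclideanSpace ℝ (Fin N) := fun s => x ξ (π s) with hXdef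
  set Xb : ℝ → EuclideanSpace ℝ (Fin N) := fun s => xb ξ (π s) with hXbdef
  have hXc : Continuous X := hxc.comp_continuous hπc hπmem
  have hXbc : Continuous Xb := hxbc.comp_continuous hπc hπmem
  have hXeq : ∀ s ∈ Icc (0:ℝ) T, X s = x ξ s := fun s hs => congrArg (x ξ) (hπid s hs)
  have hXbeq : ∀ s ∈ Icc (0:ℝ) T, Xb s = xb ξ s := fun s hs => congrArg (xb ξ) (hπid s hs)
  set u : ℝ → ℝ := fun s => ‖X s - Xb s‖ with hudef
  have huc : Continuous u := (hXc.sub hXbc).norm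
  have hu0 : ∀ s, 0 ≤ u s := fun s => norm_nonneg _
  have hXM₁ : ∀ s, ‖X s‖ ≤ M₁ := fun s => hM₁ ξ hξ (π s) (hπmem s)
  obtain ⟨Mb, hMb⟩ : ∃ Mb, ∀ s ∈ Icc (0:ℝ) T, ‖xb ξ s‖ ≤ Mb :=
    isCompact_Icc.exists_bound_of_continuousOn hxbc
  have hXbMb : ∀ s, ‖Xb s‖ ≤ Mb := fun s => hMb (π s) (hπmem s)
  set F : ℝ → EuclideanSpace ℝ (Fin N) :=
    fun s => had (α s) (vecσ σ (mvec (β s) (X s) + γ s)) with hFdef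
  set Fb : ℝ → EuclideanSpace ℝ (Fin N) :=
    fun s => had (αb s) (vecσ σ (mvec (βb s) (Xb s) + γb s)) with hFbdef
  have hFm : Measurable F := rhs_measurable σ hσc α γ β hmα hmγ hmβ X hXc
  have hFbm : Measurable Fb := rhs_measurable σ hσc αb γb βb hmαb hmγb hmβb Xb hXbc
  have hIocfin : volume (Set.Ioc (0:ℝ) T) < ⊤ := by
    simp [Real.volume_Ioc]
  -- integrability of F
  have hFint : IntegrableOn F (Set.Ioc 0 T) volume := by
    apply Integrable.mono' (integrableOn_const (C := C * M₂) hIocfin.ne)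
      hFm.aestronglyMeasurable
    filter_upwards [hC, ae_restrict_mem measurableSet_Ioc] with s hs hsmem
    have hIcc : s ∈ Icc (0:ℝ) T := Ioc_subset_Icc_self hsmem
    have h2 : ‖vecσ σ (mvec (β s) (X s) + γ s)‖ ≤ M₂ := by
      rw [hXeq s hIcc]; exact hM₂ ξ hξ s hIcc
    exact (norm_had_le _ _).trans (mul_le_mul hs.1 h2 (norm_nonneg _) hC0)
  -- integrability of Fb
  have hFbint : IntegrableOn Fb (Set.Ioc 0 T) volume := by
    apply Integrable.mono' ((integrableOn_const (C := Aα * ((Kσ:ℝ) * (Bβ * Mb + C)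
      + ‖vecσ σ (0 : EuclideanSpace ℝ (Fin N))‖)) hIocfin.ne))
      hFbm.aestronglyMeasurable
    filter_upwards [hC, hAα, hBβ] with s hs hαs hβs
    have hw : ‖mvec (βb s) (Xb s) + γb s‖ ≤ Bβ * Mb + C := by
      refine (norm_add_le _ _).trans (add_le_add ?_ hs.2.2.1)
      exact (norm_mvec_le _ _).trans
        (mul_le_mul hβs (hXbMb s) (norm_nonneg _) hBβ0)
    have hV : ‖vecσ σ (mvec (βb s) (Xb s) + γb s)‖
        ≤ (Kσ:ℝ) * (Bβ * Mb + C) + ‖vecσ σ (0 : EuclideanSpace ℝ (Fin N))‖ := by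
      calc ‖vecσ σ (mvec (βb s) (Xb s) + γb s)‖
          ≤ ‖vecσ σ (mvec (βb s) (Xb s) + γb s) - vecσ σ (0 : EuclideanSpace ℝ (Fin N))‖
            + ‖vecσ σ (0 : EuclideanSpace ℝ (Fin N))‖ := by
              nth_rewrite 1 [show vecσ σ (mvec (βb s) (Xb s) + γb s)
                  = (vecσ σ (mvec (βb s) (Xb s) + γb s)
                    - vecσ σ (0 : EuclideanSpace ℝ (Fin N)))
                    + vecσ σ (0 : EuclideanSpace ℝ (Fin N)) from (sub_add_cancel _ _).symm]
              exact norm_add_le _ _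
        _ ≤ (Kσ:ℝ) * ‖(mvec (βb s) (Xb s) + γb s) - 0‖
            + ‖vecσ σ (0 : EuclideanSpace ℝ (Fin N))‖ :=
            add_le_add (norm_vecσ_sub_le hσl _ _) le_rfl
        _ ≤ _ := by
            rw [sub_zero]
            exact add_le_add (mul_le_mul_of_nonneg_left hw hKσ0) le_rfl
    exact (norm_had_le _ _).trans
      (mul_le_mul hαs hV (norm_nonneg _) hAα0)
  -- the forcing term
  set c : ℝ → ℝ := fun s => M₂ * ‖α s - αb s‖ + Aα * (Kσ:ℝ) * M₁ * matNorm (β s - βb s)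
    + Aα * (Kσ:ℝ) * ‖γ s - γb s‖ with hcdef
  have hc0 : ∀ s, 0 ≤ c s := by
    intro s
    simp only [hcdef]
    have := matNorm_nonneg (β s - βb s)
    have := norm_nonneg (α s - αb s)
    have := norm_nonneg (γ s - γb s)
    have h1 : (0:ℝ) ≤ Aα * (Kσ:ℝ) * M₁ := by positivity
    have h2 : (0:ℝ) ≤ Aα * (Kσ:ℝ) := by positivity
    nlinarith [mul_nonneg h1 (matNorm_nonneg (β s - βb s)),
      mul_nonneg hM₂pos.le (norm_nonneg (α s - αb s)),
      mul_nonneg h2 (norm_nonneg (γ s - γb s))]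
  have hmβd : Measurable fun t => fun i j : Fin N => (β t - βb t) i j := by
    apply measurable_pi_iff.2; intro i
    apply measurable_pi_iff.2; intro j
    have h1 : Measurable fun t => β t i j :=
      (measurable_pi_apply j).comp ((measurable_pi_apply i).comp hmβ)
    have h2 : Measurable fun t => βb t i j :=
      (measurable_pi_apply j).comp ((measurable_pi_apply i).comp hmβb)
    simp only [Matrix.sub_apply]; exact h1.sub h2
  have hcm : Measurable c := by
    apply Measurable.add
    apply Measurable.add
    · exact (measurable_const.mul (hmα.sub hmαb).norm)
    · exact measurable_const.mul (matNorm_measurable _ hmβd)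
    · exact measurable_const.mul (hmγ.sub hmγb).norm
  -- integrability of the three difference terms
  have hαdint : IntegrableOn (fun s => ‖α s - αb s‖) (Set.Ioc 0 T) volume := by
    apply Integrable.mono' (integrableOn_const (C := C + Aα) hIocfin.ne)
      (hmα.sub hmαb).norm.aestronglyMeasurable
    filter_upwards [hC, hAα] with s hs hαs
    rw [norm_norm]
    exact (norm_sub_le _ _).trans (add_le_add hs.1 hαs)
  have hβdint : IntegrableOn (fun s => matNorm (β s - βb s)) (Set.Ioc 0 T) volume := by
    apply Integrable.mono' (integrableOn_const (C := C + Bβ) hIocfin.ne)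
      (matNorm_measurable _ hmβd).aestronglyMeasurable
    filter_upwards [hC, hBβ] with s hs hβs
    rw [Real.norm_eq_abs, abs_of_nonneg (matNorm_nonneg _)]
    exact (matNorm_sub_le _ _).trans (add_le_add hs.2.2.2 hβs)
  have hγdint : IntegrableOn (fun s => ‖γ s - γb s‖) (Set.Ioc 0 T) volume := by
    apply Integrable.mono' (integrableOn_const (C := C + C) hIocfin.ne)
      (hmγ.sub hmγb).norm.aestronglyMeasurable
    filter_upwards [hC] with s hs
    rw [norm_norm]
    exact (norm_sub_le _ _).trans (add_le_add hs.2.1 hs.2.2.1)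
  have hcint : IntegrableOn c (Set.Ioc 0 T) volume := by
    apply Integrable.add
    apply Integrable.add
    · exact hαdint.const_mul _
    · exact hβdint.const_mul _
    · exact hγdint.const_mul _
  -- bound on the integral of c over (0,T]
  have hcT : ∫ s in Set.Ioc (0:ℝ) T, c s ≤ (M₂ + (M₁ + 1) * Aα * (Kσ:ℝ)) * ε' := by
    have hsplit : ∫ s in Set.Ioc (0:ℝ) T, c s
        = M₂ * (∫ s in Set.Ioc (0:ℝ) T, ‖α s - αb s‖)
          + Aα * (Kσ:ℝ) * M₁ * (∫ s in Set.Ioc (0:ℝ) T, matNorm (β s - βb s))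
          + Aα * (Kσ:ℝ) * (∫ s in Set.Ioc (0:ℝ) T, ‖γ s - γb s‖) := by
      simp only [hcdef]
      rw [MeasureTheory.integral_add, MeasureTheory.integral_add, MeasureTheory.integral_const_mul, MeasureTheory.integral_const_mul, MeasureTheory.integral_const_mul]
      · exact hαdint.const_mul _
      · exact hβdint.const_mul _
      · exact (hαdint.const_mul _).add (hβdint.const_mul _)
      · exact hγdint.const_mul _
    have e1 : (∫ s in Set.Ioc (0:ℝ) T, ‖α s - αb s‖) < ε' := by
      rwa [intervalIntegral.integral_of_le hT.le] at hα1
    have e2 : (∫ s in Set.Ioc (0:ℝ) T, matNorm (β s - βb s)) < ε' := by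
      rwa [intervalIntegral.integral_of_le hT.le] at hβ1
    have e3 : (∫ s in Set.Ioc (0:ℝ) T, ‖γ s - γb s‖) < ε' := by
      rwa [intervalIntegral.integral_of_le hT.le] at hγ1
    have p1 : (0:ℝ) ≤ Aα * (Kσ:ℝ) * M₁ := by positivity
    have p2 : (0:ℝ) ≤ Aα * (Kσ:ℝ) := by positivity
    rw [hsplit]
    have q1 : M₂ * (∫ s in Set.Ioc (0:ℝ) T, ‖α s - αb s‖) ≤ M₂ * ε' :=
      mul_le_mul_of_nonneg_left e1.le hM₂pos.le
    have q2 : Aα * (Kσ:ℝ) * M₁ * (∫ s in Set.Ioc (0:ℝ) T, matNorm (β s - βb s))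
        ≤ Aα * (Kσ:ℝ) * M₁ * ε' := mul_le_mul_of_nonneg_left e2.le p1
    have q3 : Aα * (Kσ:ℝ) * (∫ s in Set.Ioc (0:ℝ) T, ‖γ s - γb s‖)
        ≤ Aα * (Kσ:ℝ) * ε' := mul_le_mul_of_nonneg_left e3.le p2
    nlinarith
  -- the main integral inequality
  have main : ∀ t ∈ Icc (0:ℝ) T, u t ≤ (M₂ + (M₁ + 1) * Aα * (Kσ:ℝ)) * ε'
      + (Aα * Bβ * (Kσ:ℝ)) * ∫ s in (0:ℝ)..t, u s := by
    intro t ht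
    have h0t : (0:ℝ) ≤ t := ht.1
    have hsub : Set.Ioc (0:ℝ) t ⊆ Set.Ioc 0 T := Ioc_subset_Ioc_right ht.2
    have hFi : IntervalIntegrable F volume 0 t :=
      (intervalIntegrable_iff_integrableOn_Ioc_of_le h0t).2 (hFint.mono_set hsub)
    have hFbi : IntervalIntegrable Fb volume 0 t :=
      (intervalIntegrable_iff_integrableOn_Ioc_of_le h0t).2 (hFbint.mono_set hsub)
    have hXX : x ξ t - xb ξ t = ∫ s in (0:ℝ)..t, (F s - Fb s) := by
      rw [intervalIntegral.integral_sub hFi hFbi]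
      rw [hxeq t ht, hxbeq t ht]
      have e1 : (∫ s in (0:ℝ)..t, had (α s) (vecσ σ (mvec (β s) (x ξ s) + γ s)))
          = ∫ s in (0:ℝ)..t, F s := by
        apply intervalIntegral.integral_congr
        intro s hs
        rw [uIcc_of_le h0t] at hs
        have : X s = x ξ s := hXeq s (Icc_subset_Icc_right ht.2 hs)
        simp only [hFdef, this]
      have e2 : (∫ s in (0:ℝ)..t, had (αb s) (vecσ σ (mvec (βb s) (xb ξ s) + γb s)))
          = ∫ s in (0:ℝ)..t, Fb s := by
        apply intervalIntegral.integral_congr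
        intro s hs
        rw [uIcc_of_le h0t] at hs
        have : Xb s = xb ξ s := hXbeq s (Icc_subset_Icc_right ht.2 hs)
        simp only [hFbdef, this]
      rw [e1, e2]
      abel
    have huint : IntegrableOn u (Set.Ioc 0 t) volume :=
      huc.integrableOn_Ioc
    calc u t = ‖x ξ t - xb ξ t‖ := by
          simp only [hudef, hXeq t ht, hXbeq t ht]
      _ = ‖∫ s in (0:ℝ)..t, (F s - Fb s)‖ := by rw [hXX]
      _ ≤ ∫ s in (0:ℝ)..t, ‖F s - Fb s‖ :=
          intervalIntegral.norm_integral_le_integral_norm h0t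
      _ = ∫ s in Set.Ioc (0:ℝ) t, ‖F s - Fb s‖ := intervalIntegral.integral_of_le h0t
      _ ≤ ∫ s in Set.Ioc (0:ℝ) t, (c s + (Aα * Bβ * (Kσ:ℝ)) * u s) := by
          refine setIntegral_mono_on_ae
            ((hFint.mono_set hsub).sub (hFbint.mono_set hsub)).norm
            ((hcint.mono_set hsub).add (huint.const_mul _))
            measurableSet_Ioc ?_
          filter_upwards [(ae_restrict_iff' measurableSet_Ioc).1 hAα,
            (ae_restrict_iff' measurableSet_Ioc).1 hBβ] with s hαs hβs hmem
          have hsT : s ∈ Set.Ioc (0:ℝ) T := hsub hmem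
          have hIcc : s ∈ Icc (0:ℝ) T := Ioc_subset_Icc_self hsT
          have hV : ‖vecσ σ (mvec (β s) (X s) + γ s)‖ ≤ M₂ := by
            rw [hXeq s hIcc]; exact hM₂ ξ hξ s hIcc
          have := pointwise_bound hσl (α s) (αb s) (γ s) (γb s) (β s) (βb s) (X s) (Xb s)
            hV (hXM₁ s) (hαs hsT) (hβs hsT) hAα0
          simp only [hFdef, hFbdef, hcdef, hudef]
          linarith
      _ = (∫ s in Set.Ioc (0:ℝ) t, c s)
          + (Aα * Bβ * (Kσ:ℝ)) * ∫ s in Set.Ioc (0:ℝ) t, u s := by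
          rw [MeasureTheory.integral_add (hcint.mono_set hsub) (huint.const_mul _), MeasureTheory.integral_const_mul]
      _ ≤ (M₂ + (M₁ + 1) * Aα * (Kσ:ℝ)) * ε'
          + (Aα * Bβ * (Kσ:ℝ)) * ∫ s in (0:ℝ)..t, u s := by
          have hmono : (∫ s in Set.Ioc (0:ℝ) t, c s) ≤ ∫ s in Set.Ioc (0:ℝ) T, c s :=
            setIntegral_mono_set hcint (ae_of_all _ hc0)
              (HasSubset.Subset.eventuallyLE hsub)
          rw [intervalIntegral.integral_of_le h0t]
          exact add_le_add (hmono.trans hcT) le_rfl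
  -- Grönwall
  have final := gronwall_aux huc hu0 hA0 hK0 main
  intro t ht
  have := final t ht
  calc ‖x ξ t - xb ξ t‖ = u t := by simp only [hudef, hXeq t ht, hXbeq t ht]
    _ ≤ _ := this
end
end

section
/- Let σ:ℝ→ℝ be continuous with Lip(σ)<∞, let τ>0, K∈ℕ, and let α_i,γ_i∈ℝ^N, β_i∈ℝ^{N×N} for i=1,…,K. Define ḡ(x):=Σ_{i=1}^K α_i⊙𝛔(β_i x+γ_i) and the τ-periodic piecewise-constant-in-time field g(x,t):=K·α_i⊙𝛔(β_i x+γ_i) for (i−1)τ/K<t≤iτ/K (extended τ-periodically in t), and g_m(x,t):=g(x,mt) for m∈ℕ. Then for each ξ∈ℝ^N the flows satisfy S_{g_m}(t)ξ → S_{ḡ}(t)ξ uniformly on [0,τ] as m→∞. -/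
open MeasureTheory Set intervalIntegral Bornology Filter
open scoped ENNReal NNReal

set_option maxHeartbeats 2000000
noncomputable section

lemma avg_vecσ_lipschitz {N : ℕ} {σ : ℝ → ℝ} {Kσ : ℝ≥0} (h : LipschitzWith Kσ σ) :
    LipschitzWith Kσ (vecσ (N := N) σ) := by
  rw [lipschitzWith_iff_dist_le_mul]
  intro u v
  rw [EuclideanSpace.dist_eq, EuclideanSpace.dist_eq]
  have h1 : ∀ i, dist (vecσ σ u i) (vecσ σ v i) ^ 2 ≤ (Kσ : ℝ) ^ 2 * dist (u i) (v i) ^ 2 := by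
    intro i
    have h2 := h.dist_le_mul (u i) (v i)
    simp only [vecσ, PiLp.toLp_apply]
    have h0 : (0:ℝ) ≤ dist (σ (u i)) (σ (v i)) := dist_nonneg
    nlinarith [dist_nonneg (x := u i) (y := v i), NNReal.coe_nonneg Kσ]
  calc Real.sqrt (∑ i, dist (vecσ σ u i) (vecσ σ v i) ^ 2)
      ≤ Real.sqrt ((Kσ:ℝ) ^ 2 * ∑ i, dist (u i) (v i) ^ 2) := by
        rw [Finset.mul_sum]
        exact Real.sqrt_le_sqrt (Finset.sum_le_sum fun i _ => h1 i)
    _ = Kσ * Real.sqrt (∑ i, dist (u i) (v i) ^ 2) := by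
        rw [Real.sqrt_mul (by positivity), Real.sqrt_sq (by positivity)]

def avg_hadLM {N : ℕ} (a : EuclideanSpace ℝ (Fin N)) :
    EuclideanSpace ℝ (Fin N) →ₗ[ℝ] EuclideanSpace ℝ (Fin N) where
  toFun := had a
  map_add' x y := by
    ext i
    simp [had, PiLp.add_apply, mul_add]
  map_smul' c x := by
    ext i
    simp [had, PiLp.smul_apply, smul_eq_mul]
    ring

def avg_mvecLM {N : ℕ} (A : Matrix (Fin N) (Fin N) ℝ) :
    EuclideanSpace ℝ (Fin N) →ₗ[ℝ] EuclideanSpace ℝ (Fin N) where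
  toFun := mvec A
  map_add' x y := by
    ext i
    simp [mvec, PiLp.add_apply, mul_add, Finset.sum_add_distrib]
  map_smul' c x := by
    ext i
    simp only [mvec, PiLp.toLp_apply, PiLp.smul_apply, smul_eq_mul, Finset.mul_sum, RingHom.id_apply]
    exact Finset.sum_congr rfl fun j _ => by ring

lemma avg_neuron_lipschitz {N : ℕ} {σ : ℝ → ℝ} {Kσ : ℝ≥0} (hσ : LipschitzWith Kσ σ)
    (a c : EuclideanSpace ℝ (Fin N)) (A : Matrix (Fin N) (Fin N) ℝ) :
    ∃ C : ℝ≥0, LipschitzWith C (fun z => had a (vecσ σ (mvec A z + c))) := by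
  have h1 : LipschitzWith ‖(avg_hadLM a).toContinuousLinearMap‖₊ (had a) :=
    (avg_hadLM a).toContinuousLinearMap.lipschitz
  have h2 : LipschitzWith ‖(avg_mvecLM A).toContinuousLinearMap‖₊ (mvec A) :=
    (avg_mvecLM A).toContinuousLinearMap.lipschitz
  have h3 : LipschitzWith 1 (fun w : EuclideanSpace ℝ (Fin N) => w + c) :=
    LipschitzWith.of_dist_le_mul (by intro x y; simp [dist_add_right])
  refine ⟨_, (h1.comp ((avg_vecσ_lipschitz hσ).comp (h3.comp h2)))⟩


lemma avg_gronwall_integral {u : ℝ → ℝ} {T a b : ℝ} (hT : 0 ≤ T) (ha : 0 ≤ a) (hb : 0 ≤ b)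
    (hu : ContinuousOn u (Set.Icc 0 T)) (hupos : ∀ s ∈ Set.Icc (0:ℝ) T, 0 ≤ u s)
    (h : ∀ t ∈ Set.Icc (0:ℝ) T, u t ≤ a + b * ∫ s in (0:ℝ)..t, u s) :
    ∀ t ∈ Set.Icc (0:ℝ) T, u t ≤ a * Real.exp (b * t) := by
  set π : ℝ → ℝ := fun s => max 0 (min s T) with hπ
  have hπmem : ∀ s, π s ∈ Set.Icc (0:ℝ) T := by
    intro s
    constructor
    · exact le_max_left _ _
    · exact max_le hT (min_le_right _ _)
  have hπid : ∀ s ∈ Set.Icc (0:ℝ) T, π s = s := by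
    intro s hs
    simp only [hπ]
    rw [min_eq_left hs.2, max_eq_right hs.1]
  set w : ℝ → ℝ := fun s => u (π s) with hw
  have hwc : Continuous w :=
    hu.comp_continuous (continuous_const.max (continuous_id.min continuous_const)) hπmem
  have hweq : ∀ s ∈ Set.Icc (0:ℝ) T, w s = u s := fun s hs => by rw [hw]; simp only; rw [hπid s hs]
  have hwpos : ∀ s, 0 ≤ w s := fun s => hupos _ (hπmem s)
  set v : ℝ → ℝ := fun t => a + b * ∫ s in (0:ℝ)..t, w s with hv
  have hvderiv : ∀ t : ℝ, HasDerivAt v (b * w t) t := by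
    intro t
    exact (((hwc.integral_hasStrictDerivAt 0 t).hasDerivAt).const_mul b).const_add a
  have hIeq : ∀ t ∈ Set.Icc (0:ℝ) T, (∫ s in (0:ℝ)..t, w s) = ∫ s in (0:ℝ)..t, u s := by
    intro t ht
    apply intervalIntegral.integral_congr
    intro s hs
    rw [Set.uIcc_of_le ht.1] at hs
    exact hweq s ⟨hs.1, hs.2.trans ht.2⟩
  have hInonneg : ∀ t ∈ Set.Icc (0:ℝ) T, 0 ≤ ∫ s in (0:ℝ)..t, w s := by
    intro t ht
    exact intervalIntegral.integral_nonneg ht.1 fun s _ => hwpos s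
  have hvnn : ∀ t ∈ Set.Icc (0:ℝ) T, 0 ≤ v t := by
    intro t ht
    have := hInonneg t ht
    have : 0 ≤ b * ∫ s in (0:ℝ)..t, w s := mul_nonneg hb this
    simp only [hv]; linarith
  have huv : ∀ t ∈ Set.Icc (0:ℝ) T, u t ≤ v t := by
    intro t ht
    rw [hv]; simp only
    rw [hIeq t ht]
    exact h t ht
  have hg := norm_le_gronwallBound_of_norm_deriv_right_le (f := v) (f' := fun t => b * w t)
      (δ := a) (K := b) (ε := 0) (a := 0) (b := T)
      (fun x _ => (hvderiv x).continuousAt.continuousWithinAt)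
      (fun x _ => (hvderiv x).hasDerivWithinAt)
      (by simp only [hv, intervalIntegral.integral_same, mul_zero, add_zero]
          rw [Real.norm_of_nonneg ha])
      ?_
  · intro t ht
    have h1 := hg t ht
    rw [gronwallBound_ε0, sub_zero] at h1
    calc u t ≤ v t := huv t ht
      _ ≤ ‖v t‖ := le_abs_self _
      _ ≤ a * Real.exp (b * t) := h1
  · intro x hx
    have hx' : x ∈ Set.Icc (0:ℝ) T := ⟨hx.1, le_of_lt hx.2⟩
    rw [Real.norm_of_nonneg (mul_nonneg hb (hwpos x)), Real.norm_of_nonneg (hvnn x hx'), add_zero]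
    have : w x ≤ v x := by
      rw [hweq x hx']
      exact huv x hx'
    exact mul_le_mul_of_nonneg_left this hb

/-- Averaging for the piecewise-constant single-neuron field.
Let `ḡ(x) = ∑_{i=1}^K αᵢ ⊙ 𝛔(βᵢ x + γᵢ)` and let `g` be the `τ`-periodic field with
`g(x,t) = K·αᵢ ⊙ 𝛔(βᵢ x + γᵢ)` for `t ∈ ((i−1)τ/K, iτ/K]` (`i = 1,…,K`), extended
`τ`-periodically. With `g_m(x,t) = g(x,mt)`, for each `ξ ∈ ℝᴺ` the solutions
`S_{g_m}(·)ξ` converge to `S_{ḡ}(·)ξ` uniformly on `[0,τ]` as `m → ∞`. -/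
theorem averaging_piecewise_neuron {N : ℕ}
    (σ : ℝ → ℝ) (hσc : Continuous σ) (Kσ : ℝ≥0) (hσl : LipschitzWith Kσ σ)
    (τ : ℝ) (hτ : 0 < τ) (K : ℕ) (hK : 0 < K)
    (α γ : ℕ → EuclideanSpace ℝ (Fin N)) (β : ℕ → Matrix (Fin N) (Fin N) ℝ)
    (g : EuclideanSpace ℝ (Fin N) → ℝ → EuclideanSpace ℝ (Fin N))
    (hgper : ∀ z : EuclideanSpace ℝ (Fin N), ∀ t : ℝ, g z (t + τ) = g z t)
    (hgdef : ∀ z : EuclideanSpace ℝ (Fin N), ∀ i : ℕ, 1 ≤ i → i ≤ K → ∀ t : ℝ,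
      ((i : ℝ) - 1) * τ / K < t → t ≤ (i : ℝ) * τ / K →
      g z t = (K : ℝ) • had (α i) (vecσ σ (mvec (β i) z + γ i)))
    (ξ : EuclideanSpace ℝ (Fin N))
    (xm : ℕ → ℝ → EuclideanSpace ℝ (Fin N))
    (hxm : ∀ m : ℕ, IsSol (fun z t => g z (m * t)) τ ξ (xm m))
    (xb : ℝ → EuclideanSpace ℝ (Fin N))
    (hxb : IsSol
      (fun z _t => ∑ i ∈ Finset.Icc 1 K, had (α i) (vecσ σ (mvec (β i) z + γ i)))
      τ ξ xb) :
    TendstoUniformlyOn (fun m t => xm m t) xb atTop (Set.Icc 0 τ) := by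
  classical
  -- abbreviations
  set F : ℕ → EuclideanSpace ℝ (Fin N) → EuclideanSpace ℝ (Fin N) :=
    fun i z => had (α i) (vecσ σ (mvec (β i) z + γ i)) with hF
  set gbar : EuclideanSpace ℝ (Fin N) → EuclideanSpace ℝ (Fin N) :=
    fun z => ∑ i ∈ Finset.Icc 1 K, F i z with hgbar
  have hK' : (0:ℝ) < K := by exact_mod_cast hK
  have hKne : (K:ℝ) ≠ 0 := ne_of_gt hK'
  -- Lipschitz constants
  have hgdefF : ∀ z : EuclideanSpace ℝ (Fin N), ∀ i : ℕ, 1 ≤ i → i ≤ K → ∀ t : ℝ,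
      ((i : ℝ) - 1) * τ / K < t → t ≤ (i : ℝ) * τ / K → g z t = (K : ℝ) • F i z := by
    intro z i h1 h2 t h3 h4
    simp only [hF]
    exact hgdef z i h1 h2 t h3 h4
  have hClx : ∀ i : ℕ, ∃ C : ℝ≥0, LipschitzWith C (F i) := by
    intro i
    simp only [hF]
    exact avg_neuron_lipschitz hσl (α i) (γ i) (β i)
  choose Cl hCl using hClx
  set L : ℝ≥0 := (Finset.Icc 1 K).sup Cl with hLdef
  have hL : ∀ i ∈ Finset.Icc 1 K, LipschitzWith L (F i) :=
    fun i hi => (hCl i).weaken (Finset.le_sup hi)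
  have hL0 : (0:ℝ) ≤ (L:ℝ) := L.coe_nonneg
  -- bound at 0
  set C0 : ℝ := ∑ i ∈ Finset.Icc 1 K, ‖F i 0‖ with hC0def
  have hC0 : ∀ i ∈ Finset.Icc 1 K, ‖F i 0‖ ≤ C0 :=
    fun i hi => Finset.single_le_sum (fun j _ => norm_nonneg (F j 0)) hi
  have hC0nn : 0 ≤ C0 := Finset.sum_nonneg fun j _ => norm_nonneg _
  have hFb : ∀ i ∈ Finset.Icc 1 K, ∀ w, ‖F i w‖ ≤ C0 + L * ‖w‖ := by
    intro i hi w
    have h1 : dist (F i w) (F i 0) ≤ (L:ℝ) * dist w 0 := (hL i hi).dist_le_mul w 0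
    rw [dist_eq_norm, dist_eq_norm, sub_zero] at h1
    calc ‖F i w‖ = ‖F i w - F i 0 + F i 0‖ := by rw [sub_add_cancel]
      _ ≤ ‖F i w - F i 0‖ + ‖F i 0‖ := norm_add_le _ _
      _ ≤ L * ‖w‖ + C0 := add_le_add h1 (hC0 i hi)
      _ = C0 + L * ‖w‖ := by ring
  -- index function
  set idx : ℝ → ℕ :=
    fun t => (⌈(K:ℝ) * (t - τ * ((⌈t / τ⌉ - 1 : ℤ) : ℝ)) / τ⌉).toNat with hidxdef
  have idx_spec : ∀ t : ℝ, (idx t ∈ Finset.Icc 1 K) ∧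
      ∀ z, g z t = (K:ℝ) • F (idx t) z := by
    intro t
    set n : ℤ := ⌈t / τ⌉ - 1 with hn
    set t₀ : ℝ := t - τ * (n : ℝ) with ht₀
    have hnlt : (n:ℝ) < t / τ := by
      have h1 := Int.ceil_lt_add_one (t / τ)
      push_cast [hn]
      linarith
    have hnle : t / τ ≤ (n:ℝ) + 1 := by
      have h1 := Int.le_ceil (t / τ)
      push_cast [hn]
      linarith
    have ht₀pos : 0 < t₀ := by
      have h2 : (n:ℝ) * τ < t := (lt_div_iff₀ hτ).mp hnlt
      rw [ht₀]; nlinarith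
    have ht₀le : t₀ ≤ τ := by
      have h2 : t ≤ ((n:ℝ) + 1) * τ := by
        have h3 := (div_le_iff₀ hτ).mp hnle
        linarith
      rw [ht₀]; nlinarith
    have hper : g = g := rfl
    have hshift : ∀ z, g z t₀ = g z t := by
      intro z
      have hp : Function.Periodic (g z) τ := hgper z
      have := hp.sub_int_mul_eq (x := t) n
      rw [ht₀, mul_comm τ (n:ℝ)]
      exact_mod_cast this
    set i : ℤ := ⌈(K:ℝ) * t₀ / τ⌉ with hi
    have hipos : 1 ≤ i := by
      have : (0:ℝ) < (K:ℝ) * t₀ / τ := by positivity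
      exact Int.ceil_pos.mpr this
    have hiK : i ≤ (K:ℤ) := by
      apply Int.ceil_le.mpr
      push_cast
      rw [div_le_iff₀ hτ]
      nlinarith
    have hylo : (i:ℝ) - 1 < (K:ℝ) * t₀ / τ := by
      have h1 := Int.ceil_lt_add_one ((K:ℝ) * t₀ / τ)
      rw [← hi] at h1
      linarith
    have hyhi : (K:ℝ) * t₀ / τ ≤ (i:ℝ) := by
      have := Int.le_ceil ((K:ℝ) * t₀ / τ)
      rw [← hi] at this
      exact this
    have hidxt : idx t = i.toNat := by
      simp only [hidxdef, hi, ht₀, hn]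
    have hitn : ((i.toNat : ℕ) : ℝ) = (i : ℝ) := by
      have : ((i.toNat : ℕ) : ℤ) = i := Int.toNat_of_nonneg (by omega)
      exact_mod_cast this
    have hmem : idx t ∈ Finset.Icc 1 K := by
      rw [hidxt, Finset.mem_Icc]
      omega
    refine ⟨hmem, fun z => ?_⟩
    rw [← hshift z]
    rw [hidxt]
    apply hgdefF z i.toNat (by omega) (by omega)
    · rw [hitn]
      rw [div_lt_iff₀ hK']
      rw [lt_div_iff₀ hτ] at hylo
      nlinarith
    · rw [hitn]
      rw [le_div_iff₀ hK']
      rw [div_le_iff₀ hτ] at hyhi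
      nlinarith
  have idx_mem : ∀ t, idx t ∈ Finset.Icc 1 K := fun t => (idx_spec t).1
  have hgval : ∀ (z : EuclideanSpace ℝ (Fin N)) (t : ℝ), g z t = (K:ℝ) • F (idx t) z :=
    fun z t => (idx_spec t).2 z
  have idx_meas : Measurable idx := by
    have h1 : Measurable fun t : ℝ => (⌈t / τ⌉ : ℤ) :=
      Int.measurable_ceil.comp (measurable_id.div_const τ)
    have h2 : Measurable fun t : ℝ => ((⌈t / τ⌉ - 1 : ℤ) : ℝ) := by
      have : Measurable fun z : ℤ => ((z - 1 : ℤ) : ℝ) := measurable_from_top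
      exact this.comp h1
    have h3 : Measurable fun t : ℝ => (K:ℝ) * (t - τ * ((⌈t / τ⌉ - 1 : ℤ) : ℝ)) / τ :=
      (((measurable_id.sub (h2.const_mul τ)).const_mul (K:ℝ)).div_const τ)
    have h4 : Measurable fun t : ℝ => ⌈(K:ℝ) * (t - τ * ((⌈t / τ⌉ - 1 : ℤ) : ℝ)) / τ⌉ :=
      Int.measurable_ceil.comp h3
    exact (measurable_from_top (f := Int.toNat)).comp h4
  -- pointwise bounds on g and gbar
  have hgb : ∀ (w : EuclideanSpace ℝ (Fin N)) (t : ℝ), ‖g w t‖ ≤ (K:ℝ) * (C0 + L * ‖w‖) := by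
    intro w t
    rw [hgval w t, norm_smul, Real.norm_of_nonneg hK'.le]
    exact mul_le_mul_of_nonneg_left (hFb _ (idx_mem t) w) hK'.le
  have hglip : ∀ (t : ℝ) (w w' : EuclideanSpace ℝ (Fin N)),
      ‖g w t - g w' t‖ ≤ (K:ℝ) * L * ‖w - w'‖ := by
    intro t w w'
    rw [hgval w t, hgval w' t, ← smul_sub, norm_smul, Real.norm_of_nonneg hK'.le]
    have h1 : dist (F (idx t) w) (F (idx t) w') ≤ (L:ℝ) * dist w w' :=
      (hL _ (idx_mem t)).dist_le_mul w w'
    rw [dist_eq_norm, dist_eq_norm] at h1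
    rw [mul_assoc]
    exact mul_le_mul_of_nonneg_left h1 hK'.le
  have hgbarb : ∀ w, ‖gbar w‖ ≤ (K:ℝ) * (C0 + L * ‖w‖) := by
    intro w
    rw [hgbar]
    calc ‖∑ i ∈ Finset.Icc 1 K, F i w‖ ≤ ∑ i ∈ Finset.Icc 1 K, ‖F i w‖ := norm_sum_le _ _
      _ ≤ ∑ _i ∈ Finset.Icc 1 K, (C0 + L * ‖w‖) :=
          Finset.sum_le_sum fun i hi => hFb i hi w
      _ = (K:ℝ) * (C0 + L * ‖w‖) := by
          rw [Finset.sum_const, Nat.card_Icc]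
          simp [nsmul_eq_mul]
          ring
  have hgbarlip : ∀ w w', ‖gbar w - gbar w'‖ ≤ (K:ℝ) * L * ‖w - w'‖ := by
    intro w w'
    rw [hgbar]
    simp only
    rw [← Finset.sum_sub_distrib]
    calc ‖∑ i ∈ Finset.Icc 1 K, (F i w - F i w')‖
        ≤ ∑ i ∈ Finset.Icc 1 K, ‖F i w - F i w'‖ := norm_sum_le _ _
      _ ≤ ∑ _i ∈ Finset.Icc 1 K, (L:ℝ) * ‖w - w'‖ := by
          apply Finset.sum_le_sum
          intro i hi
          have h1 := (hL i hi).dist_le_mul w w'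
          rw [dist_eq_norm, dist_eq_norm] at h1
          exact h1
      _ = (K:ℝ) * L * ‖w - w'‖ := by
          rw [Finset.sum_const, Nat.card_Icc]
          simp [nsmul_eq_mul]
          ring
  have hgbarcont : Continuous gbar := by
    rw [hgbar]
    exact continuous_finset_sum _ fun i _ => (hCl i).continuous
  -- integrability of t ↦ g (y t) (c t)
  have hInt : ∀ y : ℝ → EuclideanSpace ℝ (Fin N), ContinuousOn y (Set.Icc 0 τ) → ∀ c : ℝ,
      ∀ a ∈ Set.Icc (0:ℝ) τ, ∀ b ∈ Set.Icc (0:ℝ) τ,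
      IntervalIntegrable (fun s => g (y s) (c * s)) volume a b := by
    intro y hy c a ha b hb
    obtain ⟨My, hMy⟩ := isCompact_Icc.exists_bound_of_continuousOn hy
    have hsub : Set.uIoc a b ⊆ Set.Icc (0:ℝ) τ := by
      apply Set.Ioc_subset_Icc_self.trans
      apply Set.Icc_subset_Icc
      · exact le_min ha.1 hb.1
      · exact max_le ha.2 hb.2
    rw [intervalIntegrable_iff]
    apply MeasureTheory.IntegrableOn.mono_set _ hsub
    refine ⟨?_, MeasureTheory.HasFiniteIntegral.restrict_of_bounded
      (C := (K:ℝ) * (C0 + L * My)) measure_Icc_lt_top ?_⟩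
    · have hym : AEStronglyMeasurable y (volume.restrict (Set.Icc 0 τ)) :=
        hy.aestronglyMeasurable measurableSet_Icc
      have hrepr : ∀ s : ℝ, g (y s) (c * s) =
          ∑ i ∈ Finset.Icc 1 K,
            Set.indicator {u : ℝ | idx (c * u) = i} (fun u => (K:ℝ) • F i (y u)) s := by
        intro s
        rw [Finset.sum_eq_single (idx (c * s))]
        · rw [Set.indicator_of_mem (by exact rfl : s ∈ {u : ℝ | idx (c * u) = idx (c * s)})]
          exact hgval (y s) (c * s)
        · intro i _ hne
          apply Set.indicator_of_notMem
          intro hmem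
          exact hne (hmem.symm)
        · intro hnot
          exact absurd (idx_mem (c * s)) hnot
      apply AEStronglyMeasurable.congr _ (Filter.Eventually.of_forall fun s => (hrepr s).symm)
      apply Finset.aestronglyMeasurable_fun_sum
      intro i _
      apply AEStronglyMeasurable.indicator
      · exact (((hCl i).continuous.comp_aestronglyMeasurable hym).const_smul (K:ℝ))
      · exact (idx_meas.comp (measurable_id.const_mul c)) (measurableSet_singleton i)
    · rw [ae_restrict_iff' measurableSet_Icc]
      apply Filter.Eventually.of_forall
      intro s hs
      calc ‖g (y s) (c * s)‖ ≤ (K:ℝ) * (C0 + L * ‖y s‖) := hgb _ _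
        _ ≤ (K:ℝ) * (C0 + L * My) := by
            have := hMy s hs
            have hLy : (L:ℝ) * ‖y s‖ ≤ L * My := mul_le_mul_of_nonneg_left this hL0
            nlinarith
  -- integral over one period
  have hper_int : ∀ z : EuclideanSpace ℝ (Fin N),
      (∫ u in (0:ℝ)..τ, g z u) = τ • gbar z := by
    intro z
    set aj : ℕ → ℝ := fun j => j * τ / K with haj
    have hajmem : ∀ j : ℕ, j ≤ K → aj j ∈ Set.Icc (0:ℝ) τ := by
      intro j hj
      constructor
      · rw [haj]; positivity
      · rw [haj, div_le_iff₀ hK']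
        have : (j:ℝ) ≤ K := by exact_mod_cast hj
        nlinarith
    have hint : ∀ k : ℕ, k < K → IntervalIntegrable (fun u => g z u) volume (aj k) (aj (k+1)) := by
      intro k hk
      have h1 := hInt (fun _ => z) continuousOn_const 1 (aj k) (hajmem k hk.le)
        (aj (k+1)) (hajmem (k+1) hk)
      simpa using h1
    have hsum := intervalIntegral.sum_integral_adjacent_intervals hint
    have ha0 : aj 0 = 0 := by simp [haj]
    have haK : aj K = τ := by rw [haj]; field_simp
    rw [ha0, haK] at hsum
    rw [← hsum]
    have hpiece : ∀ k ∈ Finset.range K, (∫ u in aj k..aj (k+1), g z u) = τ • F (k+1) z := by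
      intro k hk
      rw [Finset.mem_range] at hk
      have hle : aj k ≤ aj (k+1) := by
        rw [haj, div_le_div_iff_of_pos_right hK']
        push_cast; nlinarith
      rw [intervalIntegral.integral_of_le hle]
      have heq : Set.EqOn (fun u => g z u) (fun _ => (K:ℝ) • F (k+1) z)
          (Set.Ioc (aj k) (aj (k+1))) := by
        intro u hu
        apply hgdefF z (k+1) (by omega) (by omega)
        · have : ((k+1:ℕ):ℝ) - 1 = (k:ℝ) := by push_cast; ring
          rw [this]
          have : (k:ℝ) * τ / K = aj k := by rw [haj]
          rw [this]
          exact hu.1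
        · have : ((k+1:ℕ):ℝ) * τ / K = aj (k+1) := by rw [haj]
          rw [this]
          exact hu.2
      rw [MeasureTheory.setIntegral_congr_fun measurableSet_Ioc heq]
      rw [MeasureTheory.setIntegral_const]
      rw [Real.volume_real_Ioc_of_le hle, smul_smul]
      congr 1
      rw [haj]
      push_cast
      field_simp
      ring
    rw [Finset.sum_congr rfl hpiece]
    rw [hgbar]
    simp only
    rw [← Finset.Ico_add_one_right_eq_Icc, Finset.sum_Ico_eq_sum_range]
    rw [← Finset.smul_sum]
    congr 1
    apply Finset.sum_congr rfl fun k _ => by rw [Nat.add_comm 1 k]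
  -- integral of g z (m s) over a fast period
  have hchunk : ∀ z : EuclideanSpace ℝ (Fin N), ∀ m : ℕ, 0 < m → ∀ k : ℕ,
      (∫ s in ((k:ℝ) * τ / m)..(((k:ℝ)+1) * τ / m), g z ((m:ℝ) * s)) = (τ / m) • gbar z := by
    intro z m hm k
    have hm0 : ((m:ℝ)) ≠ 0 := Nat.cast_ne_zero.mpr hm.ne'
    rw [intervalIntegral.integral_comp_mul_left (fun u => g z u) hm0]
    have e1 : (m:ℝ) * ((k:ℝ) * τ / m) = (k:ℝ) * τ := by field_simp
    have e2 : (m:ℝ) * (((k:ℝ)+1) * τ / m) = (k:ℝ) * τ + τ := by field_simp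
    have hp : Function.Periodic (g z) τ := hgper z
    rw [e1, e2, hp.intervalIntegral_add_eq ((k:ℝ) * τ) 0, zero_add, hper_int z, smul_smul]
    rw [inv_mul_eq_div]
  -- interval integrability of gbar ∘ xb
  have hgbarint : ∀ a ∈ Set.Icc (0:ℝ) τ, ∀ b ∈ Set.Icc (0:ℝ) τ,
      IntervalIntegrable (fun s => gbar (xb s)) volume a b := by
    intro a ha b hb
    apply ContinuousOn.intervalIntegrable
    apply hgbarcont.comp_continuousOn
    apply hxb.1.mono
    rw [Set.uIcc_comm] at *
    exact Set.uIcc_subset_Icc hb ha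
  -- the averaging estimate
  have havg : ∀ ε' : ℝ, 0 < ε' → ∃ M₀ : ℕ, 1 ≤ M₀ ∧ ∀ m : ℕ, M₀ ≤ m → ∀ t ∈ Set.Icc (0:ℝ) τ,
      ‖∫ s in (0:ℝ)..t, (g (xb s) ((m:ℝ) * s) - gbar (xb s))‖ ≤ ε' := by
    intro ε' hε'
    obtain ⟨MX, hMX⟩ := isCompact_Icc.exists_bound_of_continuousOn hxb.1
    have hMX0 : 0 ≤ MX := le_trans (norm_nonneg _) (hMX 0 ⟨le_refl _, hτ.le⟩)
    set CB : ℝ := (K:ℝ) * (C0 + L * MX) with hCBdef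
    have hCB0 : 0 ≤ CB := by rw [hCBdef]; positivity
    set CL : ℝ := 2 * ((K:ℝ) * L) with hCLdef
    have hCL0 : 0 ≤ CL := by rw [hCLdef]; positivity
    set ε₀ : ℝ := ε' / (2 * (CL * τ + 1)) with hε₀def
    have hCLτ : 0 < CL * τ + 1 := by nlinarith
    have hε₀ : 0 < ε₀ := by rw [hε₀def]; positivity
    have hε₀eq : ε₀ * (2 * (CL * τ + 1)) = ε' := by
      rw [hε₀def]; field_simp
    have hucxb := isCompact_Icc.uniformContinuousOn_of_continuous hxb.1
    rw [Metric.uniformContinuousOn_iff] at hucxb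
    obtain ⟨δ, hδ0, hδ⟩ := hucxb ε₀ hε₀
    obtain ⟨M₁, hM₁⟩ := exists_nat_gt (τ / δ)
    obtain ⟨M₂, hM₂⟩ := exists_nat_gt (4 * CB * τ / ε')
    refine ⟨max (max M₁ M₂) 1, le_max_right _ _, ?_⟩
    intro m hm t ht
    have hm1 : 1 ≤ m := le_trans (le_max_right _ _) hm
    have hm0 : (0:ℝ) < m := by exact_mod_cast hm1
    have hmM₁ : (M₁ : ℝ) ≤ m := by
      exact_mod_cast le_trans (le_trans (le_max_left _ _) (le_max_left _ _)) hm
    have hmM₂ : (M₂ : ℝ) ≤ m := by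
      exact_mod_cast le_trans (le_trans (le_max_right _ _) (le_max_left _ _)) hm
    have hτm : τ / m < δ := by
      rw [div_lt_iff₀ hm0]
      have h1 : τ / δ < m := lt_of_lt_of_le hM₁ hmM₁
      rw [div_lt_iff₀ hδ0] at h1
      nlinarith
    have hτm0 : 0 < τ / m := by positivity
    have h2CB : 2 * CB * (τ / m) ≤ ε' / 2 := by
      have h1 : 4 * CB * τ / ε' < m := lt_of_lt_of_le hM₂ hmM₂
      rw [div_lt_iff₀ hε'] at h1
      have h2 : 2 * CB * (τ / m) = 2 * CB * τ / m := by ring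
      rw [h2, div_le_iff₀ hm0]
      nlinarith
    set n : ℕ := ⌊(m:ℝ) * t / τ⌋₊ with hndef
    set sk : ℕ → ℝ := fun k => (k:ℝ) * τ / m with hskdef
    have hsk0 : sk 0 = 0 := by rw [hskdef]; norm_num
    have hsk_succ : ∀ k : ℕ, sk (k+1) = sk k + τ / m := by
      intro k; rw [hskdef]; push_cast; ring
    have hskn_le_t : sk n ≤ t := by
      have h1 : (n:ℝ) ≤ (m:ℝ) * t / τ :=
        Nat.floor_le (div_nonneg (mul_nonneg hm0.le ht.1) hτ.le)
      rw [le_div_iff₀ hτ] at h1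
      rw [hskdef, div_le_iff₀ hm0]
      nlinarith
    have ht_lt : t < sk (n+1) := by
      have h1 : (m:ℝ) * t / τ < n + 1 := Nat.lt_floor_add_one _
      rw [div_lt_iff₀ hτ] at h1
      rw [hskdef, lt_div_iff₀ hm0]
      push_cast at h1 ⊢
      nlinarith
    have htsn : t - sk n ≤ τ / m := by
      have h1 := ht_lt
      rw [hsk_succ n] at h1
      linarith
    have hsk_mono : ∀ j k : ℕ, j ≤ k → sk j ≤ sk k := by
      intro j k hjk
      rw [hskdef, div_le_div_iff_of_pos_right hm0]
      have : (j:ℝ) ≤ k := by exact_mod_cast hjk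
      nlinarith
    have hsk_mem : ∀ k, k ≤ n → sk k ∈ Set.Icc (0:ℝ) τ := by
      intro k hk
      constructor
      · rw [hskdef]; positivity
      · exact le_trans (le_trans (hsk_mono k n hk) hskn_le_t) ht.2
    set φ : ℝ → EuclideanSpace ℝ (Fin N) :=
      fun s => g (xb s) ((m:ℝ) * s) - gbar (xb s) with hφdef
    have hφint : ∀ a ∈ Set.Icc (0:ℝ) τ, ∀ b ∈ Set.Icc (0:ℝ) τ,
        IntervalIntegrable φ volume a b := by
      intro a ha b hb
      have h1 := (hInt xb hxb.1 m a ha b hb).sub (hgbarint a ha b hb)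
      rw [hφdef]
      exact h1
    have h0mem : (0:ℝ) ∈ Set.Icc (0:ℝ) τ := ⟨le_refl _, hτ.le⟩
    have hsnmem : sk n ∈ Set.Icc (0:ℝ) τ := hsk_mem n (le_refl n)
    have hints : ∀ k : ℕ, k < n → IntervalIntegrable φ volume (sk k) (sk (k+1)) :=
      fun k hk => hφint _ (hsk_mem k hk.le) _ (hsk_mem (k+1) hk)
    have hsplit2 : (∫ s in (0:ℝ)..t, φ s)
        = (∫ s in (0:ℝ)..(sk n), φ s) + ∫ s in (sk n)..t, φ s :=
      (intervalIntegral.integral_add_adjacent_intervals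
        (hφint 0 h0mem (sk n) hsnmem) (hφint (sk n) hsnmem t ht)).symm
    have hsplit1 : (∫ s in (0:ℝ)..(sk n), φ s)
        = ∑ k ∈ Finset.range n, ∫ s in (sk k)..(sk (k+1)), φ s := by
      have h1 := intervalIntegral.sum_integral_adjacent_intervals hints
      rw [hsk0] at h1
      exact h1.symm
    have hchunkb : ∀ k : ℕ, k < n → ‖∫ s in (sk k)..(sk (k+1)), φ s‖ ≤ CL * ε₀ * (τ / m) := by
      intro k hk
      have hks : sk k ∈ Set.Icc (0:ℝ) τ := hsk_mem k hk.le
      have hks1 : sk (k+1) ∈ Set.Icc (0:ℝ) τ := hsk_mem (k+1) hk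
      have hle' : sk k ≤ sk (k+1) := by rw [hsk_succ k]; linarith
      have hIg : IntervalIntegrable (fun s => g (xb s) ((m:ℝ) * s)) volume (sk k) (sk (k+1)) :=
        hInt xb hxb.1 m _ hks _ hks1
      have hIgz : IntervalIntegrable (fun s => g (xb (sk k)) ((m:ℝ) * s)) volume (sk k) (sk (k+1)) :=
        hInt (fun _ => xb (sk k)) continuousOn_const m _ hks _ hks1
      have hIgb : IntervalIntegrable (fun s => gbar (xb s)) volume (sk k) (sk (k+1)) :=
        hgbarint _ hks _ hks1
      have hskd : sk (k+1) - sk k = τ / m := by rw [hsk_succ k]; ring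
      have hchv : (∫ s in (sk k)..(sk (k+1)), g (xb (sk k)) ((m:ℝ) * s))
          = (τ / m) • gbar (xb (sk k)) := by
        rw [show sk (k+1) = ((k:ℝ)+1) * τ / m from by rw [hskdef]; push_cast; ring,
            show sk k = (k:ℝ) * τ / m from by rw [hskdef]]
        exact hchunk _ m (by omega) k
      have hdecomp : (∫ s in (sk k)..(sk (k+1)), φ s)
          = (∫ s in (sk k)..(sk (k+1)), (g (xb s) ((m:ℝ) * s) - g (xb (sk k)) ((m:ℝ) * s)))
            + ∫ s in (sk k)..(sk (k+1)), (gbar (xb (sk k)) - gbar (xb s)) := by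
        rw [intervalIntegral.integral_sub hIg hIgz,
            intervalIntegral.integral_sub intervalIntegrable_const hIgb,
            intervalIntegral.integral_const, hchv, hskd]
        rw [hφdef]
        rw [intervalIntegral.integral_sub hIg hIgb]
        abel
      have hsub2 : Set.uIoc (sk k) (sk (k+1)) ⊆ Set.Icc (0:ℝ) τ := by
        rw [Set.uIoc_of_le hle']
        intro s hs
        exact ⟨le_trans hks.1 hs.1.le, le_trans hs.2 hks1.2⟩
      have hb1 : ‖∫ s in (sk k)..(sk (k+1)), (g (xb s) ((m:ℝ) * s) - g (xb (sk k)) ((m:ℝ) * s))‖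
          ≤ ((K:ℝ) * L * ε₀) * |sk (k+1) - sk k| := by
        apply intervalIntegral.norm_integral_le_of_norm_le_const
        intro s hs
        have hsmem : s ∈ Set.Icc (0:ℝ) τ := hsub2 hs
        have hs' : s ∈ Set.Ioc (sk k) (sk (k+1)) := by
          rw [Set.uIoc_of_le hle'] at hs; exact hs
        have hdist : dist s (sk k) < δ := by
          rw [Real.dist_eq, abs_of_pos (sub_pos.mpr hs'.1)]
          have h2 := hs'.2
          rw [hsk_succ k] at h2
          linarith
        have hxbd : dist (xb s) (xb (sk k)) < ε₀ := hδ s hsmem (sk k) hks hdist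
        calc ‖g (xb s) ((m:ℝ) * s) - g (xb (sk k)) ((m:ℝ) * s)‖
            ≤ (K:ℝ) * L * ‖xb s - xb (sk k)‖ := hglip _ _ _
          _ ≤ (K:ℝ) * L * ε₀ := by
              rw [← dist_eq_norm]
              exact mul_le_mul_of_nonneg_left hxbd.le (by positivity)
      have hb2 : ‖∫ s in (sk k)..(sk (k+1)), (gbar (xb (sk k)) - gbar (xb s))‖
          ≤ ((K:ℝ) * L * ε₀) * |sk (k+1) - sk k| := by
        apply intervalIntegral.norm_integral_le_of_norm_le_const
        intro s hs
        have hsmem : s ∈ Set.Icc (0:ℝ) τ := hsub2 hs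
        have hs' : s ∈ Set.Ioc (sk k) (sk (k+1)) := by
          rw [Set.uIoc_of_le hle'] at hs; exact hs
        have hdist : dist (sk k) s < δ := by
          rw [dist_comm, Real.dist_eq, abs_of_pos (sub_pos.mpr hs'.1)]
          have h2 := hs'.2
          rw [hsk_succ k] at h2
          linarith
        have hxbd : dist (xb (sk k)) (xb s) < ε₀ := hδ (sk k) hks s hsmem hdist
        calc ‖gbar (xb (sk k)) - gbar (xb s)‖
            ≤ (K:ℝ) * L * ‖xb (sk k) - xb s‖ := hgbarlip _ _
          _ ≤ (K:ℝ) * L * ε₀ := by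
              rw [← dist_eq_norm]
              exact mul_le_mul_of_nonneg_left hxbd.le (by positivity)
      rw [hdecomp]
      calc ‖(∫ s in (sk k)..(sk (k+1)), (g (xb s) ((m:ℝ) * s) - g (xb (sk k)) ((m:ℝ) * s)))
            + ∫ s in (sk k)..(sk (k+1)), (gbar (xb (sk k)) - gbar (xb s))‖
          ≤ ‖∫ s in (sk k)..(sk (k+1)), (g (xb s) ((m:ℝ) * s) - g (xb (sk k)) ((m:ℝ) * s))‖
            + ‖∫ s in (sk k)..(sk (k+1)), (gbar (xb (sk k)) - gbar (xb s))‖ := norm_add_le _ _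
        _ ≤ ((K:ℝ) * L * ε₀) * |sk (k+1) - sk k| + ((K:ℝ) * L * ε₀) * |sk (k+1) - sk k| :=
            add_le_add hb1 hb2
        _ = CL * ε₀ * (τ / m) := by rw [hskd, abs_of_pos hτm0, hCLdef]; ring
    have hsum_le : ‖∑ k ∈ Finset.range n, ∫ s in (sk k)..(sk (k+1)), φ s‖ ≤ CL * ε₀ * τ := by
      calc ‖∑ k ∈ Finset.range n, ∫ s in (sk k)..(sk (k+1)), φ s‖
          ≤ ∑ k ∈ Finset.range n, ‖∫ s in (sk k)..(sk (k+1)), φ s‖ := norm_sum_le _ _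
        _ ≤ ∑ _k ∈ Finset.range n, CL * ε₀ * (τ / m) :=
            Finset.sum_le_sum fun k hk => hchunkb k (Finset.mem_range.mp hk)
        _ = (n:ℝ) * (CL * ε₀ * (τ / m)) := by
            rw [Finset.sum_const, Finset.card_range, nsmul_eq_mul]
        _ ≤ CL * ε₀ * τ := by
            have h2 := le_trans hskn_le_t ht.2
            simp only [hskdef] at h2
            rw [mul_div_assoc] at h2
            calc (n:ℝ) * (CL * ε₀ * (τ / m)) = CL * ε₀ * ((n:ℝ) * (τ / m)) := by ring
              _ ≤ CL * ε₀ * τ := mul_le_mul_of_nonneg_left h2 (by positivity)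
    have htail : ‖∫ s in (sk n)..t, φ s‖ ≤ (2 * CB) * |t - sk n| := by
      apply intervalIntegral.norm_integral_le_of_norm_le_const
      intro s hs
      have hsmem : s ∈ Set.Icc (0:ℝ) τ := by
        rw [Set.uIoc_of_le hskn_le_t] at hs
        exact ⟨le_trans hsnmem.1 hs.1.le, le_trans hs.2 ht.2⟩
      have hxbs : ‖xb s‖ ≤ MX := hMX s hsmem
      rw [hφdef]
      calc ‖g (xb s) ((m:ℝ) * s) - gbar (xb s)‖
          ≤ ‖g (xb s) ((m:ℝ) * s)‖ + ‖gbar (xb s)‖ := norm_sub_le _ _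
        _ ≤ (K:ℝ) * (C0 + L * ‖xb s‖) + (K:ℝ) * (C0 + L * ‖xb s‖) :=
            add_le_add (hgb _ _) (hgbarb _)
        _ ≤ 2 * CB := by
            rw [hCBdef]
            nlinarith [hK', hL0, hxbs]
    have htail2 : ‖∫ s in (sk n)..t, φ s‖ ≤ ε' / 2 := by
      have h1 : |t - sk n| ≤ τ / m := by
        rw [abs_of_nonneg (by linarith)]
        linarith
      calc ‖∫ s in (sk n)..t, φ s‖ ≤ (2 * CB) * |t - sk n| := htail
        _ ≤ 2 * CB * (τ / m) := mul_le_mul_of_nonneg_left h1 (by positivity)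
        _ ≤ ε' / 2 := h2CB
    have hgoal : (∫ s in (0:ℝ)..t, (g (xb s) ((m:ℝ) * s) - gbar (xb s)))
        = ∫ s in (0:ℝ)..t, φ s := by rw [hφdef]
    rw [hgoal, hsplit2, hsplit1]
    calc ‖(∑ k ∈ Finset.range n, ∫ s in (sk k)..(sk (k+1)), φ s) + ∫ s in (sk n)..t, φ s‖
        ≤ ‖∑ k ∈ Finset.range n, ∫ s in (sk k)..(sk (k+1)), φ s‖ + ‖∫ s in (sk n)..t, φ s‖ :=
          norm_add_le _ _
      _ ≤ CL * ε₀ * τ + ε' / 2 := add_le_add hsum_le htail2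
      _ ≤ ε' := by nlinarith
  -- conclusion via Gronwall
  rw [Metric.tendstoUniformlyOn_iff]
  intro ε hε
  set bb : ℝ := (K:ℝ) * L with hbbdef
  have hbb0 : 0 ≤ bb := by rw [hbbdef]; positivity
  set ε' : ℝ := ε / (2 * Real.exp (bb * τ)) with hε'def
  have hε'0 : 0 < ε' := by rw [hε'def]; positivity
  obtain ⟨M₀, hM₀1, hM₀⟩ := havg ε' hε'0
  rw [Filter.eventually_atTop]
  refine ⟨M₀, fun m hm => ?_⟩
  intro t ht
  set u : ℝ → ℝ := fun s => ‖xm m s - xb s‖ with hudef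
  have hucont : ContinuousOn u (Set.Icc 0 τ) := by
    rw [hudef]
    exact ((hxm m).1.sub hxb.1).norm
  have hxm2 : ∀ t' ∈ Set.Icc (0:ℝ) τ, xm m t' = ξ + ∫ s in (0:ℝ)..t', g (xm m s) ((m:ℝ) * s) :=
    (hxm m).2
  have hxb2 : ∀ t' ∈ Set.Icc (0:ℝ) τ, xb t' = ξ + ∫ s in (0:ℝ)..t', gbar (xb s) := by
    intro t' ht'
    have h := hxb.2 t' ht'
    rw [hgbar]
    simp only [hF]
    exact h
  have hkey : ∀ t' ∈ Set.Icc (0:ℝ) τ, u t' ≤ ε' + bb * ∫ s in (0:ℝ)..t', u s := by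
    intro t' ht'
    have h0m : (0:ℝ) ∈ Set.Icc (0:ℝ) τ := ⟨le_refl _, hτ.le⟩
    have hIg : IntervalIntegrable (fun s => g (xm m s) ((m:ℝ) * s)) volume 0 t' :=
      hInt (xm m) (hxm m).1 m 0 h0m t' ht'
    have hIgx : IntervalIntegrable (fun s => g (xb s) ((m:ℝ) * s)) volume 0 t' :=
      hInt xb hxb.1 m 0 h0m t' ht'
    have hIgb : IntervalIntegrable (fun s => gbar (xb s)) volume 0 t' :=
      hgbarint 0 h0m t' ht'
    have e3 : xm m t' - xb t'
        = (∫ s in (0:ℝ)..t', (g (xm m s) ((m:ℝ) * s) - g (xb s) ((m:ℝ) * s)))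
          + ∫ s in (0:ℝ)..t', (g (xb s) ((m:ℝ) * s) - gbar (xb s)) := by
      rw [intervalIntegral.integral_sub hIg hIgx, intervalIntegral.integral_sub hIgx hIgb,
        hxm2 t' ht', hxb2 t' ht']
      abel
    have hbu : IntervalIntegrable (fun s => bb * u s) volume 0 t' := by
      apply ContinuousOn.intervalIntegrable
      apply continuousOn_const.mul
      apply hucont.mono
      rw [Set.uIcc_of_le ht'.1]
      exact Set.Icc_subset_Icc (le_refl _) ht'.2
    have hb1 : ‖∫ s in (0:ℝ)..t', (g (xm m s) ((m:ℝ) * s) - g (xb s) ((m:ℝ) * s))‖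
        ≤ bb * ∫ s in (0:ℝ)..t', u s := by
      have h1 := intervalIntegral.norm_integral_le_abs_of_norm_le (μ := volume) (a := (0:ℝ)) (b := t')
        (f := fun s => g (xm m s) ((m:ℝ) * s) - g (xb s) ((m:ℝ) * s))
        (g := fun s => bb * u s)
        (Filter.Eventually.of_forall fun s => by
          rw [hbbdef, hudef]
          exact hglip _ _ _) hbu
      rw [intervalIntegral.integral_const_mul] at h1
      have h2 : 0 ≤ ∫ s in (0:ℝ)..t', u s := by
        apply intervalIntegral.integral_nonneg ht'.1
        intro s _
        rw [hudef]
        exact norm_nonneg _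
      rw [abs_of_nonneg (mul_nonneg hbb0 h2)] at h1
      exact h1
    have hb2 := hM₀ m hm t' ht'
    calc u t' = ‖xm m t' - xb t'‖ := by rw [hudef]
      _ = ‖(∫ s in (0:ℝ)..t', (g (xm m s) ((m:ℝ) * s) - g (xb s) ((m:ℝ) * s)))
          + ∫ s in (0:ℝ)..t', (g (xb s) ((m:ℝ) * s) - gbar (xb s))‖ := by rw [e3]
      _ ≤ ‖∫ s in (0:ℝ)..t', (g (xm m s) ((m:ℝ) * s) - g (xb s) ((m:ℝ) * s))‖
          + ‖∫ s in (0:ℝ)..t', (g (xb s) ((m:ℝ) * s) - gbar (xb s))‖ := norm_add_le _ _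
      _ ≤ (bb * ∫ s in (0:ℝ)..t', u s) + ε' := add_le_add hb1 hb2
      _ = ε' + bb * ∫ s in (0:ℝ)..t', u s := by ring
  have hupos : ∀ s ∈ Set.Icc (0:ℝ) τ, 0 ≤ u s := by
    intro s _
    rw [hudef]
    exact norm_nonneg _
  have hgr := avg_gronwall_integral hτ.le hε'0.le hbb0 hucont hupos hkey t ht
  have hfin : u t ≤ ε / 2 := by
    have h1 : Real.exp (bb * t) ≤ Real.exp (bb * τ) :=
      Real.exp_le_exp.mpr (mul_le_mul_of_nonneg_left ht.2 hbb0)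
    have h2 : ε' * Real.exp (bb * t) ≤ ε' * Real.exp (bb * τ) :=
      mul_le_mul_of_nonneg_left h1 hε'0.le
    have h3 : ε' * Real.exp (bb * τ) = ε / 2 := by
      rw [hε'def]
      have hE := Real.exp_pos (bb * τ)
      field_simp
    linarith
  have hdu : dist (xb t) (xm m t) = u t := by
    rw [hudef, dist_eq_norm, norm_sub_rev]
  rw [hdu]
  linarith
end
end
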